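/- arXiv:1108.5053 — 2 statements merged into one kernel-verified Lean document; each statement's English description precedes it below -/
import Mathlib

section
/- Two invertible substitutions σ and ρ on the two-letter alphabet 𝒜 = {a,b} are conjugate (σ ~ ρ) if and only if they have the same substitution matrix: M_σ = M_ρ. -/
open scoped Matrix

/-- The two-letter alphabet `𝒜 = {a, b}`; the letter `a` is `0` and the letter `b` is `1`. -/
abbrev A2 := Fin 2

/-- A substitution on the two-letter alphabet, given by the images of the two letters.
(The nonerasing condition is stated separately as `TwoSubst.NonErasing`.) -/
abbrev Subst := A2 → List A2

namespace TwoSubst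

/-- A substitution is non-erasing if the images of the letters are nonempty words. -/
def NonErasing (σ : Subst) : Prop := ∀ i : A2, σ i ≠ []

/-- The extension of a substitution to finite words (the morphism of the free monoid). -/
def apply (σ : Subst) (w : List A2) : List A2 := w.flatMap σ

/-- The `n`-th power `σ^n` of a substitution (as a substitution). -/
def substPow (σ : Subst) (n : ℕ) : Subst := fun i => (apply σ)^[n] [i]

/-- Composition of substitutions: `(σ ∘ τ)(i) = σ(τ(i))`. -/
def comp (σ τ : Subst) : Subst := fun i => apply σ (τ i)

/-- The substitution matrix `M_σ`: entry `(i, j)` is the number of occurrences of the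
letter `i` in `σ(j)`. -/
def M (σ : Subst) : Matrix (Fin 2) (Fin 2) ℤ := fun i j => ((σ j).count i : ℤ)

/-- A substitution is primitive if some power of its substitution matrix has all
entries positive. -/
def Primitive (σ : Subst) : Prop := ∃ n : ℕ, 0 < n ∧ ∀ i j, 0 < (M σ ^ n) i j

/-- A finite word, regarded as an element of the free group `F₂`. -/
def toFG (w : List A2) : FreeGroup A2 := (w.map FreeGroup.of).prod

/-- The endomorphism of the free group `F₂` induced by a substitution. -/
def endo (σ : Subst) : Monoid.End (FreeGroup A2) := FreeGroup.lift fun i => toFG (σ i)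

/-- A substitution is invertible if its extension to the free group `F₂` is an
automorphism of `F₂`. -/
def IsInvertible (σ : Subst) : Prop := Function.Bijective (endo σ)

/-- Two substitutions are conjugate, `σ ~ ρ`, if `σ = γ_w ∘ ρ` as endomorphisms of `F₂`
for some `w ∈ F₂`, where `γ_w x = w * x * w⁻¹`. -/
def Conj (σ ρ : Subst) : Prop := ∃ w : FreeGroup A2, ∀ x, endo σ x = w * endo ρ x * w⁻¹

/-- `w` is a (finite) factor of the bi-infinite word `u : ℤ → A2`. -/
def IsFactor (w : List A2) (u : ℤ → A2) : Prop :=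
  ∃ k : ℤ, w = (List.range w.length).map fun i => u (k + i)

/-- The hull `X_σ`: the set of bi-infinite words all of whose finite factors appear as
factors of `σ^n(a)` or `σ^n(b)` for some `n ∈ ℕ`. -/
def Hull (σ : Subst) : Set (ℤ → A2) :=
  { u | ∀ w : List A2, IsFactor w u → ∃ (n : ℕ) (x : A2), w <:+: substPow σ n x }

/-- The substitution `E : a ↦ b, b ↦ a`. -/
def Esub : Subst := ![[1], [0]]

/-- The substitution `L : a ↦ a, b ↦ ab`. -/
def Lsub : Subst := ![[0], [0, 1]]

/-- The composition `L^{a₁} ∘ E ∘ L^{a₂} ∘ E ∘ ⋯ ∘ E ∘ L^{a_m}` encoded by the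
nonempty list of exponents `a₁ :: [a₂, …, a_m]`. -/
def chain : ℕ → List ℕ → Subst
  | a, [] => substPow Lsub a
  | a, b :: rest => comp (substPow Lsub a) (comp Esub (chain b rest))

/-- The letter-exchange map `a ↦ b, b ↦ a` on letters. -/
def swapA : A2 → A2 := fun i => if i = 0 then 1 else 0

/-- The substitution matrix with real entries. -/
noncomputable def Mreal (σ : Subst) : Matrix (Fin 2) (Fin 2) ℝ := (M σ).map fun z => (z : ℝ)

/-- `lam` is the inflation factor (Perron–Frobenius eigenvalue) of `σ`: it is an
eigenvalue of `M_σ` admitting a positive eigenvector. -/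
def IsInflation (σ : Subst) (lam : ℝ) : Prop :=
  ∃ v : Fin 2 → ℝ, (∀ i, 0 < v i) ∧ (Mreal σ).mulVec v = lam • v

/-- `α` is the frequency of `σ`: `α ∈ (0,1)` and `(1-α, α)` is an eigenvector of `M_σ`
for an eigenvalue with positive eigenvector (necessarily the Perron-Frobenius
eigenvalue, i.e. the inflation factor, when `σ` is primitive). -/
def IsFreq (σ : Subst) (α : ℝ) : Prop :=
  0 < α ∧ α < 1 ∧ ∃ lam : ℝ, (Mreal σ).mulVec ![1 - α, α] = lam • ![1 - α, α]

/-- The automorphism `τ_a : a ↦ a⁻¹, b ↦ b` of the free group `F₂`. -/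
def tauA : Monoid.End (FreeGroup A2) :=
  FreeGroup.lift fun i : A2 => if i = 0 then (FreeGroup.of (0 : A2))⁻¹ else FreeGroup.of 1

/-- `ρ` is the reciprocal substitution `σ̄ = τ_a ∘ σ⁻¹ ∘ τ_a⁻¹` of `σ`, where
`φ` is the inverse automorphism `σ⁻¹` (note `τ_a⁻¹ = τ_a`). -/
def IsReciprocal (σ ρ : Subst) (φ : Monoid.End (FreeGroup A2)) : Prop :=
  (∀ x, φ (endo σ x) = x) ∧ (∀ x, endo σ (φ x) = x) ∧
    NonErasing ρ ∧ ∀ x, endo ρ x = tauA (φ (tauA x))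

/-- `σ` is a selfdual substitution (relative to its reciprocal `ρ = σ̄`):
`σ ~ σ̄` or `σ ~ E ∘ σ̄ ∘ E`. -/
def SelfDual (σ ρ : Subst) : Prop :=
  Conj σ ρ ∨ Conj σ (comp Esub (comp ρ Esub))

/-! ### Strands and dual maps -/

/-- Integer vectors in the plane. -/
abbrev V2 := Fin 2 → ℤ

/-- The abelianisation map `A : 𝒜* → ℤ²`, counting occurrences of each letter. -/
def Avec (w : List A2) : V2 := fun i => (w.count i : ℤ)

/-- The space `𝒢` (and its dual `𝒢*`): formal finite real linear combinations of the
basis elements `(W, i)` (resp. `(W, i*)`), `W ∈ ℤ²`, `i ∈ 𝒜`. -/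
abbrev Gspace := (V2 × A2) →₀ ℝ

/-- The image of the basis element `(W, i)` under `E₁(σ)`. -/
noncomputable def E1Basis (σ : Subst) (p : V2 × A2) : Gspace :=
  ∑ k ∈ Finset.range (σ p.2).length,
    Finsupp.single ((M σ).mulVec p.1 + Avec ((σ p.2).take k), (σ p.2).getD k p.2) (1 : ℝ)

/-- The one-dimensional extension `E₁(σ)`, as a linear map on `𝒢`. -/
noncomputable def E1 (σ : Subst) : Gspace →ₗ[ℝ] Gspace :=
  Finsupp.lift Gspace ℝ (V2 × A2) (E1Basis σ)

/-- The image of the basis element `(W, i*)` under the dual map `E₁*(σ)`: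
`E₁*(σ)(W, i*) = Σ_{j,k : σ(j)_k = i} (M_σ⁻¹·(W + A(σ(j)_{k+1}⋯σ(j)_{|σ(j)|})), j*)`. -/
noncomputable def E1starBasis (σ : Subst) (p : V2 × A2) : Gspace :=
  ∑ j : A2, ∑ k ∈ Finset.range (σ j).length,
    if (σ j).getD k j = p.2 then
      Finsupp.single ((M σ)⁻¹.mulVec (p.1 + Avec ((σ j).drop (k + 1))), j) (1 : ℝ)
    else 0

/-- The dual map `E₁*(σ)`, as a linear map on `𝒢*`. -/
noncomputable def E1star (σ : Subst) : Gspace →ₗ[ℝ] Gspace :=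
  Finsupp.lift Gspace ℝ (V2 × A2) (E1starBasis σ)

/-- The basis vector `e_a = (1,0)`. -/
def ea : V2 := ![1, 0]

/-- The basis vector `e_b = (0,1)`. -/
def eb : V2 := ![0, 1]

/-- `γ(0), …, γ(n)` is a finite dual strand: each step is `e_a` or `-e_b`. -/
def IsDualStrand (n : ℕ) (γ : ℕ → V2) : Prop :=
  ∀ k < n, γ (k + 1) - γ k = ea ∨ γ (k + 1) - γ k = -eb

/-- The element of `𝒢*` associated with a finite dual strand `γ(0), …, γ(n)`:
the sum of `(γ(k), b*)` over the `e_a`-steps and `(γ(k+1), a*)` over the `-e_b`-steps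
(the letter `a` is `0`, the letter `b` is `1`). -/
noncomputable def strandElem (n : ℕ) (γ : ℕ → V2) : Gspace :=
  ∑ k ∈ Finset.range n,
    if γ (k + 1) - γ k = ea then Finsupp.single (γ k, (1 : A2)) (1 : ℝ)
    else Finsupp.single (γ (k + 1), (0 : A2)) (1 : ℝ)

/-! ### Endomorphisms of the free group -/

/-- The exponent-sum homomorphism of the generator `i` on `F₂`. -/
def expSum (i : A2) : FreeGroup A2 →* Multiplicative ℤ :=
  FreeGroup.lift fun j : A2 => Multiplicative.ofAdd (if j = i then (1 : ℤ) else 0)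

/-- The abelianised matrix of an endomorphism of `F₂`: entry `(i,j)` is the exponent
sum of the generator `i` in the image of the generator `j`. -/
def abelMatrix (σ : Monoid.End (FreeGroup A2)) : Matrix (Fin 2) (Fin 2) ℤ :=
  fun i j => Multiplicative.toAdd (expSum i (σ (FreeGroup.of j)))

/-- `wprod ρ w k = w · ρ(w) · ρ²(w) ⋯ ρ^{k−1}(w)`. -/
def wprod (ρ : Monoid.End (FreeGroup A2)) (w : FreeGroup A2) : ℕ → FreeGroup A2
  | 0 => 1
  | k + 1 => wprod ρ w k * (ρ ^ k) w


lemma toFG_nil : toFG ([] : List A2) = 1 := rfl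

lemma toFG_cons (c : A2) (t : List A2) : toFG (c :: t) = FreeGroup.of c * toFG t := by
  simp [toFG]

lemma toFG_append (x y : List A2) : toFG (x ++ y) = toFG x * toFG y := by
  simp [toFG]

lemma toFG_singleton (c : A2) : toFG [c] = FreeGroup.of c := by simp [toFG]

lemma endo_of (σ : Subst) (i : A2) : endo σ (FreeGroup.of i) = toFG (σ i) :=
  FreeGroup.lift_apply_of

lemma apply_cons (σ : Subst) (c : A2) (t : List A2) :
    apply σ (c :: t) = σ c ++ apply σ t := by
  simp [apply]

lemma endo_toFG (σ : Subst) (w : List A2) : endo σ (toFG w) = toFG (apply σ w) := by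
  induction w with
  | nil => simp [toFG_nil, apply]
  | cons c t ih => rw [toFG_cons, map_mul, endo_of, ih, apply_cons, toFG_append]

lemma endo_comp (σ τ : Subst) : endo (comp σ τ) = (endo σ).comp (endo τ) := by
  apply FreeGroup.ext_hom
  intro a
  show endo (comp σ τ) (FreeGroup.of a) = endo σ (endo τ (FreeGroup.of a))
  rw [endo_of, endo_of, endo_toFG]
  rfl

lemma endo_comp_apply (σ τ : Subst) (x : FreeGroup A2) :
    endo (comp σ τ) x = endo σ (endo τ x) := by rw [endo_comp]; rfl

lemma expSum_toFG (i : A2) (w : List A2) :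
    expSum i (toFG w) = Multiplicative.ofAdd (w.count i : ℤ) := by
  induction w with
  | nil => simp [toFG_nil]
  | cons c t ih =>
    rw [toFG_cons, map_mul, ih, expSum, FreeGroup.lift_apply_of, ← ofAdd_add, List.count_cons]
    congr 1
    push_cast
    by_cases h : c = i <;> simp [h] <;> ring

lemma conj_refl (σ : Subst) : Conj σ σ := ⟨1, by simp⟩

lemma conj_symm {σ ρ : Subst} (h : Conj σ ρ) : Conj ρ σ := by
  obtain ⟨w, h⟩ := h
  exact ⟨w⁻¹, fun x => by rw [h x]; group⟩

lemma conj_trans {σ ρ τ : Subst} (h : Conj σ ρ) (h' : Conj ρ τ) : Conj σ τ := by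
  obtain ⟨w, h⟩ := h
  obtain ⟨u, h'⟩ := h'
  exact ⟨w * u, fun x => by rw [h x, h' x]; group⟩

lemma M_eq_of_conj {σ ρ : Subst} (h : Conj σ ρ) : M σ = M ρ := by
  obtain ⟨w, h⟩ := h
  funext i j
  have h1 : expSum i (endo σ (FreeGroup.of j)) = expSum i (endo ρ (FreeGroup.of j)) := by
    rw [h, map_mul, map_mul, map_inv, mul_comm, inv_mul_cancel_left]
  rw [endo_of, endo_of, expSum_toFG, expSum_toFG] at h1
  have h2 := Multiplicative.ofAdd.injective h1
  simpa [M] using h2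

/-- `R : a ↦ a, b ↦ ba`. -/
def Rsub : Subst := ![[0], [1, 0]]

/-- `L' : a ↦ ba, b ↦ b`. -/
def Lsubb : Subst := ![[1, 0], [1]]

/-- `R' : a ↦ ab, b ↦ b`. -/
def Rsubb : Subst := ![[0, 1], [1]]

lemma conj_of_forall_of (σ ρ : Subst) (w : FreeGroup A2)
    (h : ∀ i, endo σ (FreeGroup.of i) = w * endo ρ (FreeGroup.of i) * w⁻¹) : Conj σ ρ := by
  refine ⟨w, ?_⟩
  have he : endo σ = ((MulAut.conj w).toMonoidHom).comp (endo ρ) :=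
    FreeGroup.ext_hom _ _ (by intro a; exact h a)
  intro x
  rw [he]
  rfl

lemma bij_of_inv {f g : Monoid.End (FreeGroup A2)} (h1 : ∀ x, g (f x) = x)
    (h2 : ∀ x, f (g x) = x) : Function.Bijective f :=
  ⟨Function.LeftInverse.injective h1, Function.RightInverse.surjective h2⟩

lemma hom_eq_of_of {f g : Monoid.End (FreeGroup A2)}
    (h : ∀ a, f (FreeGroup.of a) = g (FreeGroup.of a)) (x : FreeGroup A2) : f x = g x := by
  have : (f : FreeGroup A2 →* FreeGroup A2) = g := FreeGroup.ext_hom _ _ h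
  rw [this]

lemma isInvertible_of_pair (σ : Subst) (g : A2 → FreeGroup A2)
    (h1 : ∀ a, FreeGroup.lift g (toFG (σ a)) = FreeGroup.of a)
    (h2 : ∀ a, endo σ (g a) = FreeGroup.of a) : IsInvertible σ := by
  apply bij_of_inv (g := FreeGroup.lift g)
  · intro x
    exact hom_eq_of_of (f := (FreeGroup.lift g).comp (endo σ)) (g := MonoidHom.id _)
      (fun a => by
        show (FreeGroup.lift g) (endo σ (FreeGroup.of a)) = FreeGroup.of a
        rw [endo_of, h1]) x
  · intro x
    exact hom_eq_of_of (f := (endo σ).comp (FreeGroup.lift g)) (g := MonoidHom.id _)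
      (fun a => by
        show endo σ (FreeGroup.lift g (FreeGroup.of a)) = FreeGroup.of a
        rw [FreeGroup.lift_apply_of, h2]) x

lemma isInvertible_Lsub : IsInvertible Lsub := by
  apply isInvertible_of_pair _ ![FreeGroup.of 0, (FreeGroup.of 0)⁻¹ * FreeGroup.of 1] <;>
  · intro a
    fin_cases a <;> simp [Lsub, toFG, endo_of] <;> group

lemma isInvertible_Lsubb : IsInvertible Lsubb := by
  apply isInvertible_of_pair _ ![(FreeGroup.of 1)⁻¹ * FreeGroup.of 0, FreeGroup.of 1] <;>
  · intro a
    fin_cases a <;> simp [Lsubb, toFG, endo_of] <;> group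

lemma isInvertible_of_conj {σ ρ : Subst} (h : Conj σ ρ) (hρ : IsInvertible ρ) :
    IsInvertible σ := by
  obtain ⟨w, h⟩ := h
  have he : (endo σ : FreeGroup A2 → FreeGroup A2) = (fun y => w * y * w⁻¹) ∘ (endo ρ) :=
    funext fun x => h x
  unfold IsInvertible
  rw [he]
  exact Function.Bijective.comp (MulAut.conj w).bijective hρ

lemma isInvertible_left_of_comp {σ g : Subst} (hc : IsInvertible (comp σ g))
    (hg : IsInvertible g) : IsInvertible σ := by
  have he : (endo (comp σ g) : FreeGroup A2 → FreeGroup A2) = (endo σ) ∘ (endo g) :=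
    funext fun x => endo_comp_apply σ g x
  unfold IsInvertible at hc
  rw [he] at hc
  exact (Function.Bijective.of_comp_iff _ hg).mp hc

lemma conj_comp_congr {σ ρ : Subst} (g : Subst) (h : Conj σ ρ) :
    Conj (comp σ g) (comp ρ g) := by
  obtain ⟨w, h⟩ := h
  exact ⟨w, fun x => by rw [endo_comp_apply, endo_comp_apply, h]⟩

lemma conj_comp_RL (τ : Subst) : Conj (comp τ Rsub) (comp τ Lsub) := by
  apply conj_of_forall_of _ _ ((endo τ (FreeGroup.of 0))⁻¹)
  intro i
  rw [endo_comp_apply, endo_comp_apply]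
  have h : endo Rsub (FreeGroup.of i)
      = (FreeGroup.of 0)⁻¹ * (endo Lsub (FreeGroup.of i) * FreeGroup.of 0) := by
    fin_cases i <;> simp [endo_of, Rsub, Lsub, toFG] <;> group
  rw [h, map_mul, map_inv, map_mul]
  group

lemma conj_comp_RLb (τ : Subst) : Conj (comp τ Rsubb) (comp τ Lsubb) := by
  apply conj_of_forall_of _ _ ((endo τ (FreeGroup.of 1))⁻¹)
  intro i
  rw [endo_comp_apply, endo_comp_apply]
  have h : endo Rsubb (FreeGroup.of i)
      = (FreeGroup.of 1)⁻¹ * (endo Lsubb (FreeGroup.of i) * FreeGroup.of 1) := by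
    fin_cases i <;> simp [endo_of, Rsubb, Lsubb, toFG] <;> group
  rw [h, map_mul, map_inv, map_mul]
  group

lemma conj_rotate (p t0 t1 : List A2) :
    Conj ![p ++ t0, p ++ t1] ![t0 ++ p, t1 ++ p] := by
  apply conj_of_forall_of _ _ (toFG p)
  intro i
  fin_cases i <;>
  · simp [endo_of, toFG_append]
    group

lemma fin2_cases (c : A2) : c = 0 ∨ c = 1 := by fin_cases c <;> simp

lemma length_eq_counts (w : List A2) : w.length = w.count 0 + w.count 1 := by
  induction w with
  | nil => simp
  | cons c t ih =>
    rcases fin2_cases c with rfl | rfl <;>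
      simp [List.count_cons, ih] <;> omega

lemma word_eq_of_len_one {w w' : List A2} (h : ∀ i, w.count i = w'.count i)
    (hw : w.length = 1) (hw' : w'.length = 1) : w = w' := by
  obtain ⟨c, rfl⟩ := List.length_eq_one_iff.mp hw
  obtain ⟨c', rfl⟩ := List.length_eq_one_iff.mp hw'
  by_contra hne
  have hcc : c ≠ c' := by simpa using hne
  have := h c
  simp [List.count_cons, hcc] at this
  exact hcc this.symm

lemma exists_lcp : ∀ (u v : List A2), ¬ u <+: v → ¬ v <+: u →
    ∃ (p u₂ v₂ : List A2) (a b : A2), u = p ++ a :: u₂ ∧ v = p ++ b :: v₂ ∧ a ≠ b := by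
  intro u
  induction u with
  | nil => intro v h1 _; exact absurd (List.nil_prefix) h1
  | cons x u' ih =>
    intro v h1 h2
    match v with
    | [] => exact absurd (List.nil_prefix) h2
    | y :: v' =>
      by_cases hxy : x = y
      · subst hxy
        have h1' : ¬ u' <+: v' := fun h => h1 (List.cons_prefix_cons.mpr ⟨rfl, h⟩)
        have h2' : ¬ v' <+: u' := fun h => h2 (List.cons_prefix_cons.mpr ⟨rfl, h⟩)
        obtain ⟨p, u₂, v₂, a, b, e1, e2, hab⟩ := ih v' h1' h2'
        exact ⟨x :: p, u₂, v₂, a, b, by simp [e1], by simp [e2], hab⟩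
      · exact ⟨[], u', v', x, y, rfl, rfl, hxy⟩

lemma exists_lcs (u v : List A2) (h1 : ¬ u <:+ v) (h2 : ¬ v <:+ u) :
    ∃ (S A B : List A2) (a b : A2), u = A ++ a :: S ∧ v = B ++ b :: S ∧ a ≠ b := by
  have h1' : ¬ u.reverse <+: v.reverse := by
    rw [List.reverse_prefix]; exact h1
  have h2' : ¬ v.reverse <+: u.reverse := by
    rw [List.reverse_prefix]; exact h2
  obtain ⟨p, u₂, v₂, a, b, e1, e2, hab⟩ := exists_lcp u.reverse v.reverse h1' h2'
  refine ⟨p.reverse, u₂.reverse, v₂.reverse, a, b, ?_, ?_, hab⟩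
  · have := congrArg List.reverse e1
    simpa using this
  · have := congrArg List.reverse e2
    simpa using this

lemma comp_Lsub_zero (τ : Subst) : comp τ Lsub 0 = τ 0 := by
  simp [comp, apply, Lsub]

lemma comp_Lsub_one (τ : Subst) : comp τ Lsub 1 = τ 0 ++ τ 1 := by
  simp [comp, apply, Lsub]

lemma comp_Lsubb_zero (τ : Subst) : comp τ Lsubb 0 = τ 1 ++ τ 0 := by
  simp [comp, apply, Lsubb]

lemma comp_Lsubb_one (τ : Subst) : comp τ Lsubb 1 = τ 1 := by
  simp [comp, apply, Lsubb]

lemma comp_Rsub_zero (τ : Subst) : comp τ Rsub 0 = τ 0 := by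
  simp [comp, apply, Rsub]

lemma comp_Rsub_one (τ : Subst) : comp τ Rsub 1 = τ 1 ++ τ 0 := by
  simp [comp, apply, Rsub]

lemma comp_Rsubb_zero (τ : Subst) : comp τ Rsubb 0 = τ 0 ++ τ 1 := by
  simp [comp, apply, Rsubb]

lemma comp_Rsubb_one (τ : Subst) : comp τ Rsubb 1 = τ 1 := by
  simp [comp, apply, Rsubb]

lemma exists_perm_of_partial {α : Type} [Infinite α] [Countable α]
    (f : α → Option α)
    (hfin : {x | (f x).isSome}.Finite)
    (hinj : ∀ x y z, f x = some z → f y = some z → x = y) :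
    ∃ π : Equiv.Perm α, ∀ x z, f x = some z → π x = z := by
  classical
  set D : Set α := {x | (f x).isSome} with hD
  let g : α → α := fun x => (f x).getD x
  have hg : ∀ x ∈ D, f x = some (g x) := by
    intro x hx
    obtain ⟨z, hz⟩ := Option.isSome_iff_exists.mp hx
    simp [g, hz]
  set R : Set α := g '' D with hR
  have hRfin : R.Finite := hfin.image g
  have hDc : (Dᶜ : Set α).Infinite := hfin.infinite_compl
  have hRc : (Rᶜ : Set α).Infinite := hRfin.infinite_compl
  have iD : Infinite ↥(Dᶜ) := hDc.to_subtype
  have iR : Infinite ↥(Rᶜ) := hRc.to_subtype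
  obtain ⟨dD⟩ := nonempty_denumerable ↥(Dᶜ)
  obtain ⟨dR⟩ := nonempty_denumerable ↥(Rᶜ)
  let e : ↥(Dᶜ) ≃ ↥(Rᶜ) := (@Denumerable.eqv _ dD).trans (@Denumerable.eqv _ dR).symm
  let π : α → α := fun x => if hx : x ∈ D then g x else (e ⟨x, hx⟩ : α)
  have hπD : ∀ x ∈ D, π x = g x := fun x hx => dif_pos hx
  have hπDc : ∀ (x) (hx : x ∉ D), π x = (e ⟨x, hx⟩ : α) := fun x hx => dif_neg hx
  have hinj' : Function.Injective π := by
    intro x y hxy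
    by_cases hx : x ∈ D <;> by_cases hy : y ∈ D
    · rw [hπD x hx, hπD y hy] at hxy
      exact hinj x y _ (hg x hx) (hxy ▸ hg y hy)
    · rw [hπD x hx, hπDc y hy] at hxy
      have hmem : (↑(e ⟨y, hy⟩) : α) ∈ R := hxy ▸ ⟨x, hx, rfl⟩
      exact absurd hmem (e ⟨y, hy⟩).2
    · rw [hπDc x hx, hπD y hy] at hxy
      have hmem : (↑(e ⟨x, hx⟩) : α) ∈ R := hxy.symm ▸ ⟨y, hy, rfl⟩
      exact absurd hmem (e ⟨x, hx⟩).2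
    · rw [hπDc x hx, hπDc y hy] at hxy
      have : e ⟨x, hx⟩ = e ⟨y, hy⟩ := Subtype.coe_injective hxy
      have := e.injective this
      exact congrArg Subtype.val this
  have hsurj : Function.Surjective π := by
    intro y
    by_cases hy : y ∈ R
    · obtain ⟨x, hx, hgx⟩ := hy
      exact ⟨x, by rw [hπD x hx, hgx]⟩
    · refine ⟨(e.symm ⟨y, hy⟩ : α), ?_⟩
      have hm : (e.symm ⟨y, hy⟩ : α) ∉ D := (e.symm ⟨y, hy⟩).2
      rw [hπDc _ hm]
      have : (⟨(e.symm ⟨y, hy⟩ : α), hm⟩ : ↥(Dᶜ)) = e.symm ⟨y, hy⟩ := rfl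
      rw [this, e.apply_symm_apply]
  refine ⟨Equiv.ofBijective π ⟨hinj', hsurj⟩, ?_⟩
  intro x z hxz
  have hx : x ∈ D := by simp [hD, hxz]
  have : g x = z := by simp [g, hxz]
  show π x = z
  rw [hπD x hx, this]

/-! ### The Stallings-type graph used to contradict generation -/

abbrev X2 : Type := Option (ℕ ⊕ ℕ ⊕ ℕ)

def va (k : ℕ) : X2 := some (Sum.inl k)
def vb (k : ℕ) : X2 := some (Sum.inr (Sum.inl k))
def vs (k : ℕ) : X2 := some (Sum.inr (Sum.inr k))

lemma va_ne_none (k : ℕ) : va k ≠ none := by simp [va]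
lemma vb_ne_none (k : ℕ) : vb k ≠ none := by simp [vb]
lemma vs_ne_none (k : ℕ) : vs k ≠ none := by simp [vs]

def vertP (n s : ℕ) (mk : ℕ → X2) (i : ℕ) : X2 :=
  if i = 0 then none else if i < n then mk (i-1) else if i < n + s then vs (i - n) else none

lemma vertP_zero (n s : ℕ) (mk : ℕ → X2) : vertP n s mk 0 = none := by simp [vertP]

lemma vertP_lt {n s : ℕ} {mk : ℕ → X2} {i : ℕ} (h0 : 0 < i) (h : i < n) :
    vertP n s mk i = mk (i-1) := by
  have h1 : i ≠ 0 := by omega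
  simp [vertP, h1, h]

lemma vertP_mid {n s : ℕ} {mk : ℕ → X2} {i : ℕ} (hn : 0 < n) (h1 : n ≤ i) (h2 : i < n + s) :
    vertP n s mk i = vs (i - n) := by
  have e0 : i ≠ 0 := by omega
  have e1 : ¬ i < n := by omega
  simp [vertP, e0, e1, h2]

lemma vertP_top {n s : ℕ} {mk : ℕ → X2} {i : ℕ} (h : n + s ≤ i) (hn : 0 < n) :
    vertP n s mk i = none := by
  by_cases e0 : i = 0
  · simp [vertP, e0]
  · have e1 : ¬ i < n := by omega
    have e2 : ¬ i < n + s := by omega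
    simp [vertP, e0, e1, e2]

section Core

variable (A B S : List A2) (a b : A2)

/-- The predecessor partial map of the graph, for the letter `ℓ`. -/
def fmap (ℓ : A2) : X2 → Option X2 := fun x =>
  match x with
  | none =>
      if S.length = 0 then
        (if ℓ = a then some (vertP (A.length+1) S.length va A.length)
         else if ℓ = b then some (vertP (B.length+1) S.length vb B.length) else none)
      else
        (if ℓ = S.getD (S.length - 1) 0 then some (vs (S.length - 1)) else none)
  | some (Sum.inl k) =>
      if k + 2 ≤ A.length + 1 ∧ ℓ = A.getD k 0 then some (vertP (A.length+1) S.length va k)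
      else none
  | some (Sum.inr (Sum.inl k)) =>
      if k + 2 ≤ B.length + 1 ∧ ℓ = B.getD k 0 then some (vertP (B.length+1) S.length vb k)
      else none
  | some (Sum.inr (Sum.inr k)) =>
      if k = 0 then
        (if 0 < S.length then
          (if ℓ = a then some (vertP (A.length+1) S.length va A.length)
           else if ℓ = b then some (vertP (B.length+1) S.length vb B.length) else none)
         else none)
      else
        (if k < S.length ∧ ℓ = S.getD (k-1) 0 then some (vs (k-1)) else none)

/-- The successor partial map of the graph, for the letter `ℓ`. -/
def gmap (ℓ : A2) : X2 → Option X2 := fun z =>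
  match z with
  | none =>
      if ℓ = (A ++ a :: S).getD 0 0 then some (vertP (A.length+1) S.length va 1)
      else if ℓ = (B ++ b :: S).getD 0 0 then some (vertP (B.length+1) S.length vb 1)
      else none
  | some (Sum.inl k) =>
      if k + 2 ≤ A.length + 1 ∧ ℓ = (A ++ a :: S).getD (k+1) 0 then
        some (vertP (A.length+1) S.length va (k+2))
      else none
  | some (Sum.inr (Sum.inl k)) =>
      if k + 2 ≤ B.length + 1 ∧ ℓ = (B ++ b :: S).getD (k+1) 0 then
        some (vertP (B.length+1) S.length vb (k+2))
      else none
  | some (Sum.inr (Sum.inr k)) =>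
      if k < S.length ∧ ℓ = S.getD k 0 then
        some (vertP (A.length+1) S.length va (A.length + 2 + k))
      else none

lemma getD_word_lt {A S : List A2} {a : A2} {k : ℕ} (h : k < A.length) :
    (A ++ a :: S).getD k 0 = A.getD k 0 :=
  List.getD_append _ _ _ _ h

lemma getD_word_eq (A S : List A2) (a : A2) :
    (A ++ a :: S).getD A.length 0 = a := by
  rw [List.getD_append_right _ _ _ _ le_rfl]
  simp

lemma getD_word_gt (A S : List A2) (a : A2) (j : ℕ) :
    (A ++ a :: S).getD (A.length + 1 + j) 0 = S.getD j 0 := by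
  rw [List.getD_append_right _ _ _ _ (by omega)]
  have e : A.length + 1 + j - A.length = j + 1 := by omega
  rw [e]
  simp [List.getD]

lemma PU_zero (hA : A.length = 0) :
    vertP (A.length+1) S.length va A.length = none := by
  rw [hA]; exact vertP_zero _ _ _

lemma PU_pos (hA : 0 < A.length) :
    vertP (A.length+1) S.length va A.length = va (A.length - 1) :=
  vertP_lt hA (by omega)

lemma PV_zero (hB : B.length = 0) :
    vertP (B.length+1) S.length vb B.length = none := by
  rw [hB]; exact vertP_zero _ _ _

lemma PV_pos (hB : 0 < B.length) :
    vertP (B.length+1) S.length vb B.length = vb (B.length - 1) :=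
  vertP_lt hB (by omega)

lemma head_word_zero (hA : A.length = 0) : (A ++ a :: S).getD 0 0 = a := by
  have := getD_word_eq A S a
  rw [hA] at this
  exact this

lemma head_word_pos (hA : 0 < A.length) : (A ++ a :: S).getD 0 0 = A.getD 0 0 :=
  getD_word_lt hA

lemma fmap_gmap (hab : a ≠ b)
    (hh : (A ++ a :: S).getD 0 0 ≠ (B ++ b :: S).getD 0 0) :
    ∀ (ℓ : A2) (x z : X2), fmap A B S a b ℓ x = some z → gmap A B S a b ℓ z = some x := by
  intro ℓ x z h
  match x with
  | none =>
    simp only [fmap] at h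
    split_ifs at h with hS hla hlb hls <;> try exact Option.noConfusion h
    · -- S empty, ℓ = a : z is the last vertex of the A-path
      obtain rfl := (Option.some.inj h).symm
      by_cases hA : A.length = 0
      · rw [PU_zero A S hA]
        simp only [gmap]
        rw [if_pos (by rw [hla, head_word_zero A S a hA])]
        rw [vertP_top (by omega) (by omega)]
      · rw [PU_pos A S (by omega)]
        simp only [gmap, va]
        rw [if_pos ⟨by omega, by
          rw [hla]
          have e : A.length - 1 + 1 = A.length := by omega
          rw [e, getD_word_eq]⟩]
        rw [show A.length - 1 + 2 = A.length + 1 by omega]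
        rw [vertP_top (by omega) (by omega)]
    · -- S empty, ℓ = b
      obtain rfl := (Option.some.inj h).symm
      by_cases hB : B.length = 0
      · rw [PV_zero B S hB]
        simp only [gmap]
        rw [if_neg (fun e => hh (by rw [← e, hlb, head_word_zero B S b hB]))]
        rw [if_pos (by rw [hlb, head_word_zero B S b hB])]
        rw [vertP_top (by omega) (by omega)]
      · rw [PV_pos B S (by omega)]
        simp only [gmap, vb]
        rw [if_pos ⟨by omega, by
          rw [hlb]
          have e : B.length - 1 + 1 = B.length := by omega
          rw [e, getD_word_eq]⟩]
        rw [show B.length - 1 + 2 = B.length + 1 by omega]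
        rw [vertP_top (by omega) (by omega)]
    · -- S nonempty, ℓ = last letter of S : z = vs (S.length - 1)
      obtain rfl := (Option.some.inj h).symm
      simp only [gmap, vs]
      rw [if_pos ⟨by omega, by rw [hls]⟩]
      rw [vertP_top (by omega) (by omega)]
  | some (Sum.inl k) =>
    simp only [fmap] at h
    split_ifs at h with hc <;> try exact Option.noConfusion h
    · obtain ⟨hk, hl⟩ := hc
      obtain rfl := (Option.some.inj h).symm
      by_cases hk0 : k = 0
      · subst hk0
        rw [vertP_zero]
        simp only [gmap]
        rw [if_pos (by rw [hl, head_word_pos A S a (by omega)])]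
        rw [vertP_lt (by omega) (by omega)]
        simp [va, vb]
      · rw [vertP_lt (by omega) (by omega)]
        simp only [gmap, va]
        rw [if_pos ⟨by omega, by
          rw [hl]
          have e : k - 1 + 1 = k := by omega
          rw [e, getD_word_lt (by omega)]⟩]
        rw [show k - 1 + 2 = k + 1 by omega]
        rw [vertP_lt (by omega) (by omega)]
        have e2 : k + 1 - 1 = k := by omega
        rw [e2]
        simp [va, vb]
  | some (Sum.inr (Sum.inl k)) =>
    simp only [fmap] at h
    split_ifs at h with hc <;> try exact Option.noConfusion h
    · obtain ⟨hk, hl⟩ := hc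
      obtain rfl := (Option.some.inj h).symm
      by_cases hk0 : k = 0
      · subst hk0
        rw [vertP_zero]
        simp only [gmap]
        rw [if_neg (fun e => hh (by rw [← e, hl, head_word_pos B S b (by omega)]))]
        rw [if_pos (by rw [hl, head_word_pos B S b (by omega)])]
        rw [vertP_lt (by omega) (by omega)]
        simp [va, vb]
      · rw [vertP_lt (by omega) (by omega)]
        simp only [gmap, vb]
        rw [if_pos ⟨by omega, by
          rw [hl]
          have e : k - 1 + 1 = k := by omega
          rw [e, getD_word_lt (by omega)]⟩]
        rw [show k - 1 + 2 = k + 1 by omega]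
        rw [vertP_lt (by omega) (by omega)]
        have e2 : k + 1 - 1 = k := by omega
        rw [e2]
        simp [va, vb]
  | some (Sum.inr (Sum.inr k)) =>
    simp only [fmap] at h
    split_ifs at h with hk0 hS hla hlb hc <;> try exact Option.noConfusion h
    · -- k = 0, merge vertex, ℓ = a
      subst hk0
      obtain rfl := (Option.some.inj h).symm
      by_cases hA : A.length = 0
      · rw [PU_zero A S hA]
        simp only [gmap]
        rw [if_pos (by rw [hla, head_word_zero A S a hA])]
        rw [vertP_mid (by omega) (by omega) (by omega)]
        rw [show 1 - (A.length + 1) = 0 by omega]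
        simp [vs]
      · rw [PU_pos A S (by omega)]
        simp only [gmap, va]
        rw [if_pos ⟨by omega, by
          rw [hla]
          have e : A.length - 1 + 1 = A.length := by omega
          rw [e, getD_word_eq]⟩]
        rw [show A.length - 1 + 2 = A.length + 1 by omega]
        rw [vertP_mid (by omega) (by omega) (by omega)]
        rw [show A.length + 1 - (A.length + 1) = 0 by omega]
        simp [vs]
    · -- k = 0, merge vertex, ℓ = b
      subst hk0
      obtain rfl := (Option.some.inj h).symm
      by_cases hB : B.length = 0
      · rw [PV_zero B S hB]
        simp only [gmap]
        rw [if_neg (fun e => hh (by rw [← e, hlb, head_word_zero B S b hB]))]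
        rw [if_pos (by rw [hlb, head_word_zero B S b hB])]
        rw [vertP_mid (by omega) (by omega) (by omega)]
        rw [show 1 - (B.length + 1) = 0 by omega]
        simp [vs]
      · rw [PV_pos B S (by omega)]
        simp only [gmap, vb]
        rw [if_pos ⟨by omega, by
          rw [hlb]
          have e : B.length - 1 + 1 = B.length := by omega
          rw [e, getD_word_eq]⟩]
        rw [show B.length - 1 + 2 = B.length + 1 by omega]
        rw [vertP_mid (by omega) (by omega) (by omega)]
        rw [show B.length + 1 - (B.length + 1) = 0 by omega]
        simp [vs]
    · -- k ≥ 1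
      obtain ⟨hk, hl⟩ := hc
      obtain rfl := (Option.some.inj h).symm
      simp only [gmap, vs]
      rw [if_pos ⟨by omega, by rw [hl]⟩]
      rw [vertP_mid (by omega) (by omega) (by omega)]
      rw [show A.length + 2 + (k-1) - (A.length + 1) = k by omega]
      simp [vs]


lemma walkU : ∀ i, i < A.length + 1 + S.length →
    fmap A B S a b ((A ++ a :: S).getD i 0) (vertP (A.length+1) S.length va (i+1))
      = some (vertP (A.length+1) S.length va i) := by
  intro i hi
  rcases lt_trichotomy (i+1) (A.length+1) with h1 | h1 | h1
  · -- interior of the A-path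
    rw [vertP_lt (by omega) h1, show i + 1 - 1 = i by omega,
      show (A ++ a :: S).getD i 0 = A.getD i 0 from getD_word_lt (by omega)]
    simp only [fmap, va]
    rw [if_pos ⟨by omega, trivial⟩]
  · -- arriving at the merge vertex
    have hiA : i = A.length := by omega
    subst hiA
    rw [getD_word_eq]
    by_cases hS : S.length = 0
    · rw [vertP_top (by omega) (by omega)]
      simp [fmap, hS]
    · rw [vertP_mid (by omega) (by omega) (by omega),
        show A.length + 1 - (A.length + 1) = 0 by omega]
      have h0 : 0 < S.length := by omega
      simp [fmap, vs, h0]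
  · -- along the shared suffix
    obtain ⟨j, hj⟩ : ∃ j, i = A.length + 1 + j := ⟨i - (A.length+1), by omega⟩
    subst hj
    rw [getD_word_gt]
    by_cases hend : A.length + 1 + j + 1 = A.length + 1 + S.length
    · rw [hend, vertP_top le_rfl (by omega)]
      have hj' : S.length - 1 = j := by omega
      simp only [fmap]
      rw [if_neg (show ¬ S.length = 0 by omega), hj', if_pos rfl]
      rw [vertP_mid (by omega) (by omega) (by omega),
        show A.length + 1 + j - (A.length + 1) = j by omega]
    · rw [vertP_mid (by omega) (by omega) (by omega),
        show A.length + 1 + j + 1 - (A.length + 1) = j + 1 by omega]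
      simp only [fmap, vs]
      rw [if_neg (show ¬ j + 1 = 0 by omega),
        if_pos ⟨(show j + 1 < S.length by omega), by rw [show j + 1 - 1 = j by omega]⟩]
      rw [vertP_mid (by omega) (by omega) (by omega),
        show A.length + 1 + j - (A.length + 1) = j by omega,
        show j + 1 - 1 = j by omega]
      rfl

lemma walkV (hab : a ≠ b) : ∀ i, i < B.length + 1 + S.length →
    fmap A B S a b ((B ++ b :: S).getD i 0) (vertP (B.length+1) S.length vb (i+1))
      = some (vertP (B.length+1) S.length vb i) := by
  have hba : ¬ b = a := Ne.symm hab
  intro i hi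
  rcases lt_trichotomy (i+1) (B.length+1) with h1 | h1 | h1
  · rw [vertP_lt (by omega) h1, show i + 1 - 1 = i by omega,
      show (B ++ b :: S).getD i 0 = B.getD i 0 from getD_word_lt (by omega)]
    simp only [fmap, vb]
    rw [if_pos ⟨by omega, trivial⟩]
  · have hiB : i = B.length := by omega
    subst hiB
    rw [getD_word_eq]
    by_cases hS : S.length = 0
    · rw [vertP_top (by omega) (by omega)]
      simp [fmap, hS, hba]
    · rw [vertP_mid (by omega) (by omega) (by omega),
        show B.length + 1 - (B.length + 1) = 0 by omega]
      have h0 : 0 < S.length := by omega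
      simp [fmap, vs, h0, hba]
  · obtain ⟨j, hj⟩ : ∃ j, i = B.length + 1 + j := ⟨i - (B.length+1), by omega⟩
    subst hj
    rw [getD_word_gt]
    by_cases hend : B.length + 1 + j + 1 = B.length + 1 + S.length
    · rw [hend, vertP_top le_rfl (by omega)]
      have hj' : S.length - 1 = j := by omega
      simp only [fmap]
      rw [if_neg (show ¬ S.length = 0 by omega), hj', if_pos rfl]
      rw [vertP_mid (by omega) (by omega) (by omega),
        show B.length + 1 + j - (B.length + 1) = j by omega]
    · rw [vertP_mid (by omega) (by omega) (by omega),
        show B.length + 1 + j + 1 - (B.length + 1) = j + 1 by omega]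
      simp only [fmap, vs]
      rw [if_neg (show ¬ j + 1 = 0 by omega),
        if_pos ⟨(show j + 1 < S.length by omega), by rw [show j + 1 - 1 = j by omega]⟩]
      rw [vertP_mid (by omega) (by omega) (by omega),
        show B.length + 1 + j - (B.length + 1) = j by omega,
        show j + 1 - 1 = j by omega]
      rfl

lemma fmap_dom_finite (ℓ : A2) : {x | (fmap A B S a b ℓ x).isSome}.Finite := by
  apply Set.Finite.subset (s := insert (none : X2)
    ((va '' Set.Iio (A.length)) ∪ (vb '' Set.Iio (B.length)) ∪ (vs '' Set.Iio (S.length))))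
  · apply Set.Finite.insert
    refine Set.Finite.union (Set.Finite.union ?_ ?_) ?_
    · exact (Set.finite_Iio _).image _
    · exact (Set.finite_Iio _).image _
    · exact (Set.finite_Iio _).image _
  · intro x hx
    match x with
    | none => exact Set.mem_insert _ _
    | some (Sum.inl k) =>
      simp only [Set.mem_setOf_eq, fmap] at hx
      split_ifs at hx with hc
      · obtain ⟨hk, -⟩ := hc
        exact Set.mem_insert_of_mem _ (Or.inl (Or.inl ⟨k, Set.mem_Iio.mpr (by omega), rfl⟩))
      · simp at hx
    | some (Sum.inr (Sum.inl k)) =>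
      simp only [Set.mem_setOf_eq, fmap] at hx
      split_ifs at hx with hc
      · obtain ⟨hk, -⟩ := hc
        exact Set.mem_insert_of_mem _ (Or.inl (Or.inr ⟨k, Set.mem_Iio.mpr (by omega), rfl⟩))
      · simp at hx
    | some (Sum.inr (Sum.inr k)) =>
      simp only [Set.mem_setOf_eq, fmap] at hx
      split_ifs at hx with hk0 hS hla hlb hc
      · exact Set.mem_insert_of_mem _ (Or.inr ⟨k, Set.mem_Iio.mpr (by omega), rfl⟩)
      · exact Set.mem_insert_of_mem _ (Or.inr ⟨k, Set.mem_Iio.mpr (by omega), rfl⟩)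
      · simp at hx
      · simp at hx
      · obtain ⟨hk, -⟩ := hc
        exact Set.mem_insert_of_mem _ (Or.inr ⟨k, Set.mem_Iio.mpr (by omega), rfl⟩)
      · simp at hx

lemma walk_gen (π : A2 → Equiv.Perm X2) (w : List A2) :
    ∀ (vert : ℕ → X2), (∀ i, i < w.length → π (w.getD i 0) (vert (i+1)) = vert i) →
    FreeGroup.lift π (toFG w) (vert w.length) = vert 0 := by
  induction w with
  | nil => intro vert _; simp [toFG_nil]
  | cons c t ih =>
    intro vert h
    rw [toFG_cons, map_mul]
    have ht := ih (fun i => vert (i+1)) (fun i hi => by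
      have h2 := h (i+1) (by simp only [List.length_cons]; omega)
      simpa using h2)
    show (FreeGroup.lift π (FreeGroup.of c) * FreeGroup.lift π (toFG t)) (vert (t.length + 1))
      = vert 0
    rw [Equiv.Perm.mul_apply, ht, FreeGroup.lift_apply_of]
    have h0 := h 0 (by simp)
    simpa using h0

theorem core_not_top (hab : a ≠ b)
    (hh : (A ++ a :: S).getD 0 0 ≠ (B ++ b :: S).getD 0 0)
    (hsize : 3 ≤ (A ++ a :: S).length + (B ++ b :: S).length) :
    Subgroup.closure {toFG (A ++ a :: S), toFG (B ++ b :: S)} ≠ ⊤ := by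
  classical
  have hπ : ∀ ℓ : A2, ∃ π : Equiv.Perm X2, ∀ x z, fmap A B S a b ℓ x = some z → π x = z :=
    fun ℓ => exists_perm_of_partial _ (fmap_dom_finite A B S a b ℓ)
      (fun x y z hx hy => by
        have hx' := fmap_gmap A B S a b hab hh ℓ x z hx
        have hy' := fmap_gmap A B S a b hab hh ℓ y z hy
        rw [hx'] at hy'
        exact (Option.some.inj hy'))
  choose π hπ using hπ
  intro htop
  have hlenU : (A ++ a :: S).length = A.length + 1 + S.length := by simp; omega
  have hlenV : (B ++ b :: S).length = B.length + 1 + S.length := by simp; omega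
  have hwU : FreeGroup.lift π (toFG (A ++ a :: S)) none = none := by
    have h0 := walk_gen π (A ++ a :: S) (vertP (A.length+1) S.length va)
      (fun i hi => hπ _ _ _ (walkU A B S a b i (by rw [hlenU] at hi; exact hi)))
    rw [hlenU, vertP_top le_rfl (by omega), vertP_zero] at h0
    exact h0
  have hwV : FreeGroup.lift π (toFG (B ++ b :: S)) none = none := by
    have h0 := walk_gen π (B ++ b :: S) (vertP (B.length+1) S.length vb)
      (fun i hi => hπ _ _ _ (walkV A B S a b hab i (by rw [hlenV] at hi; exact hi)))
    rw [hlenV, vertP_top le_rfl (by omega), vertP_zero] at h0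
    exact h0
  have hle : Subgroup.closure {toFG (A ++ a :: S), toFG (B ++ b :: S)} ≤
      Subgroup.comap (FreeGroup.lift π)
        (MulAction.stabilizer (Equiv.Perm X2) (none : X2)) := by
    rw [Subgroup.closure_le]
    intro g hg
    simp only [Set.mem_insert_iff, Set.mem_singleton_iff] at hg
    rcases hg with rfl | rfl
    · exact Subgroup.mem_comap.mpr (MulAction.mem_stabilizer_iff.mpr hwU)
    · exact Subgroup.mem_comap.mpr (MulAction.mem_stabilizer_iff.mpr hwV)
  have hofc : ∀ c : A2, π c none = none := by
    intro c
    have h1 : FreeGroup.of c ∈ Subgroup.comap (FreeGroup.lift π)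
        (MulAction.stabilizer (Equiv.Perm X2) (none : X2)) :=
      (htop ▸ hle) (Subgroup.mem_top _)
    simp only [Subgroup.mem_comap, MulAction.mem_stabilizer_iff, Equiv.Perm.smul_def,
      FreeGroup.lift_apply_of] at h1
    exact h1
  by_cases hS : S.length = 0
  · by_cases hA : A.length = 0
    · have hBpos : 0 < B.length := by
        simp only [List.length_append, List.length_cons] at hsize; omega
      have hf : fmap A B S a b b none = some (vb (B.length - 1)) := by
        simp only [fmap]
        rw [if_pos hS, if_neg (Ne.symm hab), if_pos (by trivial), PV_pos B S hBpos]
      have h2 := hπ b none _ hf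
      rw [hofc b] at h2
      exact vb_ne_none _ h2.symm
    · have hApos : 0 < A.length := by omega
      have hf : fmap A B S a b a none = some (va (A.length - 1)) := by
        simp only [fmap]
        rw [if_pos hS, if_pos (by trivial), PU_pos A S hApos]
      have h2 := hπ a none _ hf
      rw [hofc a] at h2
      exact va_ne_none _ h2.symm
  · have hf : fmap A B S a b (S.getD (S.length - 1) 0) none = some (vs (S.length - 1)) := by
      simp only [fmap]
      rw [if_neg hS, if_pos (by trivial)]
    have h2 := hπ _ none _ hf
    rw [hofc _] at h2
    exact vs_ne_none _ h2.symm

end Core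

lemma conj_rotate' (σ : Subst) (p t0 t1 : List A2) (h0 : σ 0 = p ++ t0) (h1 : σ 1 = p ++ t1) :
    Conj σ ![t0 ++ p, t1 ++ p] := by
  apply conj_of_forall_of _ _ (toFG p)
  intro i
  rcases fin2_cases i with rfl | rfl
  · rw [endo_of, endo_of, h0]
    show toFG (p ++ t0) = toFG p * toFG ((![t0 ++ p, t1 ++ p] : Subst) 0) * (toFG p)⁻¹
    rw [show (![t0 ++ p, t1 ++ p] : Subst) 0 = t0 ++ p by simp, toFG_append, toFG_append]
    group
  · rw [endo_of, endo_of, h1]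
    show toFG (p ++ t1) = toFG p * toFG ((![t0 ++ p, t1 ++ p] : Subst) 1) * (toFG p)⁻¹
    rw [show (![t0 ++ p, t1 ++ p] : Subst) 1 = t1 ++ p by simp, toFG_append, toFG_append]
    group

lemma images_ne {σ : Subst} (hσ : IsInvertible σ) : σ 0 ≠ σ 1 := by
  intro h
  have h1 : endo σ (FreeGroup.of 0) = endo σ (FreeGroup.of 1) := by
    rw [endo_of, endo_of, h]
  have h2 := hσ.1 h1
  have h3 := FreeGroup.of_injective h2
  exact absurd h3 (by decide)

lemma closure_pair_eq_top {σ : Subst} (hσ : IsInvertible σ) :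
    Subgroup.closure {toFG (σ 0), toFG (σ 1)} = ⊤ := by
  have hset : Set.range (fun i : A2 => toFG (σ i)) = {toFG (σ 0), toFG (σ 1)} := by
    ext x
    constructor
    · rintro ⟨i, rfl⟩
      rcases fin2_cases i with rfl | rfl
      · exact Or.inl rfl
      · exact Or.inr rfl
    · rintro (rfl | rfl)
      exacts [⟨0, rfl⟩, ⟨1, rfl⟩]
  have hr : (endo σ).range = ⊤ := MonoidHom.range_eq_top.mpr hσ.2
  have he : (endo σ).range = Subgroup.closure (Set.range (fun i : A2 => toFG (σ i))) :=
    FreeGroup.range_lift_eq_closure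
  rw [he, hset] at hr
  exact hr

lemma closure_pair_conj (x y p : FreeGroup A2)
    (h : Subgroup.closure ({x, y} : Set (FreeGroup A2)) = ⊤) :
    Subgroup.closure ({p⁻¹ * x * p, p⁻¹ * y * p} : Set (FreeGroup A2)) = ⊤ := by
  have hmap := MonoidHom.map_closure ((MulAut.conj p⁻¹).toMonoidHom) ({x, y} : Set (FreeGroup A2))
  rw [h] at hmap
  have himg : ((MulAut.conj p⁻¹).toMonoidHom) '' ({x, y} : Set (FreeGroup A2))
      = {p⁻¹ * x * p, p⁻¹ * y * p} := by
    rw [Set.image_insert_eq, Set.image_singleton]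
    simp [MulAut.conj]
  rw [himg] at hmap
  rw [← hmap]
  have hsurj : Function.Surjective ((MulAut.conj p⁻¹).toMonoidHom :
      FreeGroup A2 →* FreeGroup A2) := (MulAut.conj p⁻¹).surjective
  exact Subgroup.map_top_of_surjective _ hsurj

lemma lemmaD (σ : Subst) (hne : NonErasing σ) (hσ : IsInvertible σ)
    (hsize : 3 ≤ (σ 0).length + (σ 1).length) :
    ∃ σ' : Subst, NonErasing σ' ∧
      (Conj σ (comp σ' Lsub) ∨ Conj σ (comp σ' Lsubb)) := by
  by_cases h01 : σ 0 <+: σ 1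
  · obtain ⟨w, hw⟩ := h01
    have hwne : w ≠ [] := by
      intro h
      rw [h, List.append_nil] at hw
      exact images_ne hσ hw
    refine ⟨![σ 0, w], ?_, Or.inl ?_⟩
    · intro i
      rcases fin2_cases i with rfl | rfl
      · simpa using hne 0
      · simpa using hwne
    · have heq : σ = comp ![σ 0, w] Lsub := by
        funext i
        rcases fin2_cases i with rfl | rfl
        · rw [comp_Lsub_zero]; simp
        · rw [comp_Lsub_one]; simp [hw]
      rw [← heq]
      exact conj_refl σ
  by_cases h10 : σ 1 <+: σ 0
  · obtain ⟨w, hw⟩ := h10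
    have hwne : w ≠ [] := by
      intro h
      rw [h, List.append_nil] at hw
      exact images_ne hσ hw.symm
    refine ⟨![w, σ 1], ?_, Or.inr ?_⟩
    · intro i
      rcases fin2_cases i with rfl | rfl
      · simpa using hwne
      · simpa using hne 1
    · have heq : σ = comp ![w, σ 1] Lsubb := by
        funext i
        rcases fin2_cases i with rfl | rfl
        · rw [comp_Lsubb_zero]; simp [hw]
        · rw [comp_Lsubb_one]; simp
      rw [← heq]
      exact conj_refl σ
  -- neither is a prefix of the other
  obtain ⟨p, u₂, v₂, a, b, e0, e1, hab⟩ := exists_lcp (σ 0) (σ 1) h01 h10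
  have hconj : Conj σ ![(a :: u₂) ++ p, (b :: v₂) ++ p] := conj_rotate' σ p _ _ e0 e1
  set U : List A2 := (a :: u₂) ++ p with hU
  set V : List A2 := (b :: v₂) ++ p with hV
  have hUne : U ≠ [] := by simp [hU]
  have hVne : V ≠ [] := by simp [hV]
  by_cases hUV : U <:+ V
  · obtain ⟨w, hw⟩ := hUV
    have hwne : w ≠ [] := by
      intro h
      rw [h, List.nil_append] at hw
      have : a = b := by
        have h2 : a :: (u₂ ++ p) = b :: (v₂ ++ p) := by
          simpa [hU, hV] using hw
        exact (List.cons.injEq _ _ _ _ ▸ h2).1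
      exact hab this
    refine ⟨![U, w], ?_, Or.inl ?_⟩
    · intro i
      rcases fin2_cases i with rfl | rfl
      · simpa using hUne
      · simpa using hwne
    · have heq : (![U, V] : Subst) = comp ![U, w] Rsub := by
        funext i
        rcases fin2_cases i with rfl | rfl
        · rw [comp_Rsub_zero]; simp
        · rw [comp_Rsub_one]; simp [hw]
      have h3 : Conj (![U, V] : Subst) (comp ![U, w] Lsub) := by
        rw [heq]
        exact conj_comp_RL ![U, w]
      exact conj_trans hconj h3
  by_cases hVU : V <:+ U
  · obtain ⟨w, hw⟩ := hVU
    have hwne : w ≠ [] := by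
      intro h
      rw [h, List.nil_append] at hw
      have : b = a := by
        have h2 : b :: (v₂ ++ p) = a :: (u₂ ++ p) := by
          simpa [hU, hV] using hw
        exact (List.cons.injEq _ _ _ _ ▸ h2).1
      exact hab this.symm
    refine ⟨![w, V], ?_, Or.inr ?_⟩
    · intro i
      rcases fin2_cases i with rfl | rfl
      · simpa using hwne
      · simpa using hVne
    · have heq : (![U, V] : Subst) = comp ![w, V] Rsubb := by
        funext i
        rcases fin2_cases i with rfl | rfl
        · rw [comp_Rsubb_zero]; simp [hw]
        · rw [comp_Rsubb_one]; simp
      have h3 : Conj (![U, V] : Subst) (comp ![w, V] Lsubb) := by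
        rw [heq]
        exact conj_comp_RLb ![w, V]
      exact conj_trans hconj h3
  -- neither suffix: contradiction with invertibility
  exfalso
  obtain ⟨S, Aw, Bw, c, d, eU, eV, hcd⟩ := exists_lcs U V hUV hVU
  have htop0 := closure_pair_eq_top hσ
  have htop1 : Subgroup.closure ({toFG U, toFG V} : Set (FreeGroup A2)) = ⊤ := by
    have hxU : toFG U = (toFG p)⁻¹ * toFG (σ 0) * toFG p := by
      rw [e0, hU, toFG_append, toFG_append]
      group
    have hxV : toFG V = (toFG p)⁻¹ * toFG (σ 1) * toFG p := by
      rw [e1, hV, toFG_append, toFG_append]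
      group
    rw [hxU, hxV]
    exact closure_pair_conj _ _ _ htop0
  have hhead : (Aw ++ c :: S).getD 0 0 ≠ (Bw ++ d :: S).getD 0 0 := by
    rw [← eU, ← eV]
    have h1 : U.getD 0 0 = a := by rw [hU]; rfl
    have h2 : V.getD 0 0 = b := by rw [hV]; rfl
    rw [h1, h2]
    exact hab
  have hsize' : 3 ≤ (Aw ++ c :: S).length + (Bw ++ d :: S).length := by
    rw [← eU, ← eV]
    have h1 : U.length = (σ 0).length := by rw [hU, e0]; simp; omega
    have h2 : V.length = (σ 1).length := by rw [hV, e1]; simp; omega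
    omega
  have := core_not_top Aw Bw S c d hcd hhead hsize'
  rw [← eU, ← eV] at this
  exact this htop1

lemma M_nonneg (τ : Subst) (i j : A2) : 0 ≤ M τ i j := by
  simp [M]

lemma count_eq_of_M_eq {τ τ' : Subst} (h : M τ = M τ') (i j : A2) :
    (τ j).count i = (τ' j).count i := by
  have h2 := congrFun (congrFun h i) j
  simpa [M] using h2

lemma len_eq_of_M_eq {τ τ' : Subst} (h : M τ = M τ') (j : A2) :
    (τ j).length = (τ' j).length := by
  rw [length_eq_counts, length_eq_counts, count_eq_of_M_eq h 0 j, count_eq_of_M_eq h 1 j]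

lemma M_comp_Lsub0 (τ : Subst) (i : A2) : M (comp τ Lsub) i 0 = M τ i 0 := by
  simp [M, comp_Lsub_zero]

lemma M_comp_Lsub1 (τ : Subst) (i : A2) : M (comp τ Lsub) i 1 = M τ i 0 + M τ i 1 := by
  simp [M, comp_Lsub_one, List.count_append]

lemma M_comp_Lsubb0 (τ : Subst) (i : A2) : M (comp τ Lsubb) i 0 = M τ i 0 + M τ i 1 := by
  simp [M, comp_Lsubb_zero, List.count_append]
  ring

lemma M_comp_Lsubb1 (τ : Subst) (i : A2) : M (comp τ Lsubb) i 1 = M τ i 1 := by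
  simp [M, comp_Lsubb_one]

lemma lift_ofAdd_toFG (c0 c1 : ℤ) (w : List A2) :
    FreeGroup.lift (fun j : A2 => Multiplicative.ofAdd (if j = 0 then c0 else c1)) (toFG w)
      = Multiplicative.ofAdd ((w.count 0 : ℤ) * c0 + (w.count 1 : ℤ) * c1) := by
  induction w with
  | nil => simp [toFG_nil]
  | cons c t ih =>
    rw [toFG_cons, map_mul, ih, FreeGroup.lift_apply_of, ← ofAdd_add]
    congr 1
    rcases fin2_cases c with rfl | rfl <;>
      simp [List.count_cons] <;> push_cast <;> ring

lemma cols_ne {σ : Subst} (hne : NonErasing σ) (hσ : IsInvertible σ) :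
    ¬ (∀ i, M σ i 0 = M σ i 1) := by
  intro hcol
  set ψ := FreeGroup.lift (fun j : A2 =>
    Multiplicative.ofAdd (if j = 0 then M σ 1 0 else -(M σ 0 0))) with hψ
  have hker : ∀ w ∈ ({toFG (σ 0), toFG (σ 1)} : Set (FreeGroup A2)), w ∈ ψ.ker := by
    intro w hw
    simp only [Set.mem_insert_iff, Set.mem_singleton_iff] at hw
    rcases hw with rfl | rfl
    · rw [MonoidHom.mem_ker, hψ, lift_ofAdd_toFG]
      have e : ((σ 0).count 0 : ℤ) * M σ 1 0 + ((σ 0).count 1 : ℤ) * -(M σ 0 0) = 0 := by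
        have e1 : ((σ 0).count 0 : ℤ) = M σ 0 0 := by simp [M]
        have e2 : ((σ 0).count 1 : ℤ) = M σ 1 0 := by simp [M]
        rw [e1, e2]; ring
      rw [e]
      rfl
    · rw [MonoidHom.mem_ker, hψ, lift_ofAdd_toFG]
      have e : ((σ 1).count 0 : ℤ) * M σ 1 0 + ((σ 1).count 1 : ℤ) * -(M σ 0 0) = 0 := by
        have e1 : ((σ 1).count 0 : ℤ) = M σ 0 1 := by simp [M]
        have e2 : ((σ 1).count 1 : ℤ) = M σ 1 1 := by simp [M]
        rw [e1, e2, ← hcol 0, ← hcol 1]; ring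
      rw [e]
      rfl
  have hle : Subgroup.closure ({toFG (σ 0), toFG (σ 1)} : Set (FreeGroup A2)) ≤ ψ.ker :=
    (Subgroup.closure_le _).mpr hker
  rw [closure_pair_eq_top hσ] at hle
  have h0 : ψ (FreeGroup.of 0) = 1 := hle (Subgroup.mem_top _)
  have h1 : ψ (FreeGroup.of 1) = 1 := hle (Subgroup.mem_top _)
  rw [hψ, FreeGroup.lift_apply_of] at h0 h1
  simp only [if_pos rfl] at h0
  simp only [if_neg (by decide : ¬ (1 : A2) = 0)] at h1
  have e0 : M σ 1 0 = 0 := by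
    have := Multiplicative.ofAdd.injective h0
    simpa using this
  have e1 : M σ 0 0 = 0 := by
    have := Multiplicative.ofAdd.injective h1
    simpa using this
  have hc0 : (σ 0).count 0 = 0 := by
    have : ((σ 0).count 0 : ℤ) = 0 := by rw [show ((σ 0).count 0 : ℤ) = M σ 0 0 by simp [M], e1]
    exact_mod_cast this
  have hc1 : (σ 0).count 1 = 0 := by
    have : ((σ 0).count 1 : ℤ) = 0 := by rw [show ((σ 0).count 1 : ℤ) = M σ 1 0 by simp [M], e0]
    exact_mod_cast this
  have : (σ 0).length = 0 := by rw [length_eq_counts, hc0, hc1]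
  exact hne 0 (List.length_eq_zero_iff.mp this)

lemma key_induction : ∀ (n : ℕ) (σ ρ : Subst), NonErasing σ → NonErasing ρ →
    IsInvertible σ → IsInvertible ρ →
    (σ 0).length + (σ 1).length = n → M σ = M ρ → Conj σ ρ := by
  intro n
  induction n using Nat.strong_induction_on with
  | _ n ih =>
  intro σ ρ hneσ hneρ hσ hρ hn hM
  have hlen : ∀ j, (σ j).length = (ρ j).length := fun j => len_eq_of_M_eq hM j
  have hp0 : 0 < (σ 0).length := List.length_pos_iff.mpr (hneσ 0)
  have hp1 : 0 < (σ 1).length := List.length_pos_iff.mpr (hneσ 1)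
  by_cases h3 : 3 ≤ n
  · obtain ⟨σ', hneσ', hcσ⟩ := lemmaD σ hneσ hσ (by omega)
    obtain ⟨ρ', hneρ', hcρ⟩ := lemmaD ρ hneρ hρ (by rw [← hlen 0, ← hlen 1]; omega)
    rcases hcσ with hcσ | hcσ <;> rcases hcρ with hcρ | hcρ
    · -- both of the form τ ∘ L
      have hMσ' : M (comp σ' Lsub) = M σ := M_eq_of_conj (conj_symm hcσ)
      have hMρ' : M (comp ρ' Lsub) = M ρ := M_eq_of_conj (conj_symm hcρ)
      have hM' : M σ' = M ρ' := by
        funext i j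
        rcases fin2_cases j with rfl | rfl
        · rw [← M_comp_Lsub0 σ' i, ← M_comp_Lsub0 ρ' i, hMσ', hMρ', hM]
        · have e1 : M σ' i 1 = M (comp σ' Lsub) i 1 - M (comp σ' Lsub) i 0 := by
            rw [M_comp_Lsub1, M_comp_Lsub0]; ring
          have e2 : M ρ' i 1 = M (comp ρ' Lsub) i 1 - M (comp ρ' Lsub) i 0 := by
            rw [M_comp_Lsub1, M_comp_Lsub0]; ring
          rw [e1, e2, hMσ', hMρ', hM]
      have hlc : ∀ j, (comp σ' Lsub j).length = (σ j).length := len_eq_of_M_eq hMσ'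
      have hsmall : (σ' 0).length + (σ' 1).length < n := by
        have l0 := hlc 0
        have l1 := hlc 1
        rw [comp_Lsub_zero] at l0
        rw [comp_Lsub_one, List.length_append] at l1
        have := List.length_pos_iff.mpr (hneσ' 0)
        omega
      have hσ'i : IsInvertible σ' :=
        isInvertible_left_of_comp (isInvertible_of_conj (conj_symm hcσ) hσ) isInvertible_Lsub
      have hρ'i : IsInvertible ρ' :=
        isInvertible_left_of_comp (isInvertible_of_conj (conj_symm hcρ) hρ) isInvertible_Lsub
      have hIH := ih _ hsmall σ' ρ' hneσ' hneρ' hσ'i hρ'i rfl hM'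
      exact conj_trans hcσ (conj_trans (conj_comp_congr Lsub hIH) (conj_symm hcρ))
    · -- mixed: contradiction
      exfalso
      apply cols_ne hneσ hσ
      intro i
      have hMσ' : M (comp σ' Lsub) = M σ := M_eq_of_conj (conj_symm hcσ)
      have hMρ' : M (comp ρ' Lsubb) = M ρ := M_eq_of_conj (conj_symm hcρ)
      have e1 : M σ i 1 - M σ i 0 = M σ' i 1 := by
        rw [← hMσ', M_comp_Lsub0, M_comp_Lsub1]; ring
      have e2 : M σ i 0 - M σ i 1 = M ρ' i 0 := by
        rw [hM, ← hMρ', M_comp_Lsubb0, M_comp_Lsubb1]; ring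
      have n1 := M_nonneg σ' i 1
      have n2 := M_nonneg ρ' i 0
      omega
    · -- mixed: contradiction (other direction)
      exfalso
      apply cols_ne hneσ hσ
      intro i
      have hMσ' : M (comp σ' Lsubb) = M σ := M_eq_of_conj (conj_symm hcσ)
      have hMρ' : M (comp ρ' Lsub) = M ρ := M_eq_of_conj (conj_symm hcρ)
      have e1 : M σ i 0 - M σ i 1 = M σ' i 0 := by
        rw [← hMσ', M_comp_Lsubb0, M_comp_Lsubb1]; ring
      have e2 : M σ i 1 - M σ i 0 = M ρ' i 1 := by
        rw [hM, ← hMρ', M_comp_Lsub0, M_comp_Lsub1]; ring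
      have n1 := M_nonneg σ' i 0
      have n2 := M_nonneg ρ' i 1
      omega
    · -- both of the form τ ∘ L'
      have hMσ' : M (comp σ' Lsubb) = M σ := M_eq_of_conj (conj_symm hcσ)
      have hMρ' : M (comp ρ' Lsubb) = M ρ := M_eq_of_conj (conj_symm hcρ)
      have hM' : M σ' = M ρ' := by
        funext i j
        rcases fin2_cases j with rfl | rfl
        · have e1 : M σ' i 0 = M (comp σ' Lsubb) i 0 - M (comp σ' Lsubb) i 1 := by
            rw [M_comp_Lsubb1, M_comp_Lsubb0]; ring
          have e2 : M ρ' i 0 = M (comp ρ' Lsubb) i 0 - M (comp ρ' Lsubb) i 1 := by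
            rw [M_comp_Lsubb1, M_comp_Lsubb0]; ring
          rw [e1, e2, hMσ', hMρ', hM]
        · rw [← M_comp_Lsubb1 σ' i, ← M_comp_Lsubb1 ρ' i, hMσ', hMρ', hM]
      have hlc : ∀ j, (comp σ' Lsubb j).length = (σ j).length := len_eq_of_M_eq hMσ'
      have hsmall : (σ' 0).length + (σ' 1).length < n := by
        have l0 := hlc 0
        have l1 := hlc 1
        rw [comp_Lsubb_zero, List.length_append] at l0
        rw [comp_Lsubb_one] at l1
        have := List.length_pos_iff.mpr (hneσ' 1)
        omega
      have hσ'i : IsInvertible σ' :=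
        isInvertible_left_of_comp (isInvertible_of_conj (conj_symm hcσ) hσ) isInvertible_Lsubb
      have hρ'i : IsInvertible ρ' :=
        isInvertible_left_of_comp (isInvertible_of_conj (conj_symm hcρ) hρ) isInvertible_Lsubb
      have hIH := ih _ hsmall σ' ρ' hneσ' hneρ' hσ'i hρ'i rfl hM'
      exact conj_trans hcσ (conj_trans (conj_comp_congr Lsubb hIH) (conj_symm hcρ))
  · -- n = 2 : both substitutions are determined by the matrix
    have e0 : (σ 0).length = 1 := by omega
    have e1 : (σ 1).length = 1 := by omega
    have heq : σ = ρ := by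
      funext j
      have hl : (σ j).length = 1 := by rcases fin2_cases j with rfl | rfl <;> assumption
      exact word_eq_of_len_one (fun i => count_eq_of_M_eq hM i j) hl (by rw [← hlen j]; exact hl)
    rw [heq]
    exact conj_refl ρ

end TwoSubst

open TwoSubst in
/-- Two invertible substitutions on two letters are conjugate if and
only if they have the same substitution matrix. -/
theorem conj_iff_same_matrix (σ ρ : Subst) (hneσ : NonErasing σ) (hneρ : NonErasing ρ)
    (hσ : IsInvertible σ) (hρ : IsInvertible ρ) :
    Conj σ ρ ↔ M σ = M ρ := by
  constructor
  · exact M_eq_of_conj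
  · intro h
    exact key_induction _ σ ρ hneσ hneρ hσ hρ rfl h
end

section
/- Let σ and ρ be primitive substitutions on the two-letter alphabet 𝒜 = {a,b}. If σ^k ~ ρ^m for some integers k, m ≥ 1 (i.e., σ^k = γ_w ∘ ρ^m as endomorphisms of F₂ for some w ∈ F₂), then the hulls are equal: X_σ = X_ρ. -/
open scoped Matrix

namespace HullAux
open TwoSubst List

/-- iterated application -/
def ap (σ : Subst) (n : ℕ) (w : List A2) : List A2 := (apply σ)^[n] w

lemma apply_append (σ : Subst) (x y : List A2) :
    apply σ (x ++ y) = apply σ x ++ apply σ y := by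
  simp [apply]

lemma ap_zero (σ : Subst) (w : List A2) : ap σ 0 w = w := rfl

lemma ap_succ (σ : Subst) (n : ℕ) (w : List A2) :
    ap σ (n+1) w = ap σ n (apply σ w) := Function.iterate_succ_apply _ _ _

lemma ap_succ' (σ : Subst) (n : ℕ) (w : List A2) :
    ap σ (n+1) w = apply σ (ap σ n w) := Function.iterate_succ_apply' _ _ _

lemma ap_append (σ : Subst) (n : ℕ) (x y : List A2) :
    ap σ n (x ++ y) = ap σ n x ++ ap σ n y := by
  induction n generalizing x y with
  | zero => rfl
  | succ n ih => rw [ap_succ, apply_append, ih, ap_succ, ap_succ]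

lemma substPow_eq (σ : Subst) (n : ℕ) (i : A2) : substPow σ n i = ap σ n [i] := rfl

lemma ap_nil (σ : Subst) (n : ℕ) : ap σ n [] = [] := by
  induction n with
  | zero => rfl
  | succ n ih => rw [ap_succ]; simpa [apply] using ih

lemma ap_eq_flatMap (σ : Subst) (n : ℕ) (w : List A2) :
    ap σ n w = w.flatMap (substPow σ n) := by
  induction w with
  | nil => simp [ap_nil]
  | cons c w ih =>
      have : (c :: w) = [c] ++ w := rfl
      rw [this, ap_append, List.flatMap_append, ih]
      congr 1
      simp [substPow_eq]

lemma ap_ap (σ : Subst) (m n : ℕ) (w : List A2) :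
    ap σ m (ap σ n w) = ap σ (m + n) w := (Function.iterate_add_apply _ m n w).symm

lemma apply_substPow (σ : Subst) (k : ℕ) (w : List A2) :
    apply (substPow σ k) w = ap σ k w := (ap_eq_flatMap σ k w).symm

lemma substPow_comp (σ : Subst) (k n : ℕ) (i : A2) :
    substPow (substPow σ k) n i = substPow σ (k * n) i := by
  have h : apply (substPow σ k) = (apply σ)^[k] := by
    funext w; exact apply_substPow σ k w
  show (apply (substPow σ k))^[n] [i] = (apply σ)^[k*n] [i]
  rw [h, ← Function.iterate_mul]

lemma ap_infix (σ : Subst) (n : ℕ) {u v : List A2} (h : u <:+: v) :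
    ap σ n u <:+: ap σ n v := by
  obtain ⟨s, t, hst⟩ := h
  exact ⟨ap σ n s, ap σ n t, by rw [← ap_append, ← ap_append, hst]⟩

lemma substPow_infix_of_mem (σ : Subst) (n : ℕ) {i : A2} {w : List A2} (h : i ∈ w) :
    substPow σ n i <:+: ap σ n w := by
  obtain ⟨s, t, hst⟩ := List.append_of_mem h
  refine ⟨ap σ n s, ap σ n t, ?_⟩
  rw [substPow_eq, ← ap_append, ← ap_append, hst]
  simp

lemma length_le_apply {σ : Subst} (hσ : NonErasing σ) (w : List A2) :
    w.length ≤ (apply σ w).length := by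
  induction w with
  | nil => simp [apply]
  | cons c w ih =>
      have h1 : 1 ≤ (σ c).length := List.length_pos_iff.2 (hσ c)
      have : apply σ (c :: w) = σ c ++ apply σ w := rfl
      rw [this, List.length_append, List.length_cons]
      omega

lemma length_le_ap {σ : Subst} (hσ : NonErasing σ) (n : ℕ) (w : List A2) :
    w.length ≤ (ap σ n w).length := by
  induction n generalizing w with
  | zero => exact le_rfl
  | succ n ih =>
      rw [ap_succ]
      exact le_trans (length_le_apply hσ w) (ih (apply σ w))

lemma substPow_ne_nil {σ : Subst} (hσ : NonErasing σ) (n : ℕ) (i : A2) :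
    substPow σ n i ≠ [] := by
  have := length_le_ap hσ n [i]
  intro h
  have h2 : ap σ n [i] = [] := h
  rw [h2] at this
  simp at this

lemma nonErasing_substPow {σ : Subst} (hσ : NonErasing σ) (k : ℕ) :
    NonErasing (substPow σ k) := fun i => substPow_ne_nil hσ k i

end HullAux

namespace HullAux
open TwoSubst List

lemma count_apply (σ : Subst) (w : List A2) (i : A2) :
    (apply σ w).count i = ∑ c : A2, (σ c).count i * w.count c := by
  induction w with
  | nil => simp [apply]
  | cons c w ih =>
      have : apply σ (c :: w) = σ c ++ apply σ w := rfl
      rw [this, List.count_append, ih]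
      rw [Fin.sum_univ_two, Fin.sum_univ_two]
      fin_cases c <;> simp [List.count_cons] <;> ring

lemma Mpow_count (σ : Subst) (n : ℕ) (i j : A2) :
    (M σ ^ n) i j = ((substPow σ n j).count i : ℤ) := by
  induction n generalizing i j with
  | zero =>
      simp only [pow_zero, Matrix.one_apply]
      have : substPow σ 0 j = [j] := rfl
      rw [this]
      by_cases h : i = j
      · subst h; simp
      · simp [h, Ne.symm h, List.count_singleton', if_neg h]
  | succ n ih =>
      rw [pow_succ', Matrix.mul_apply]
      have hsp : substPow σ (n+1) j = apply σ (substPow σ n j) := by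
        rw [substPow_eq, ap_succ', substPow_eq]
      rw [hsp, count_apply]
      push_cast
      rw [Fin.sum_univ_two, Fin.sum_univ_two]
      rw [ih 0 j, ih 1 j]
      simp [M]

lemma mem_of_prim {σ : Subst} {n₁ : ℕ} (h : ∀ i j, 0 < (M σ ^ n₁) i j) :
    ∀ i j, i ∈ substPow σ n₁ j := by
  intro i j
  have := h i j
  rw [Mpow_count] at this
  have : 0 < (substPow σ n₁ j).count i := by exact_mod_cast this
  exact List.count_pos_iff.mp this

lemma mem_substPow_add {σ : Subst} (hσ : NonErasing σ) {n₁ : ℕ}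
    (h : ∀ i j, i ∈ substPow σ n₁ j) (t : ℕ) (i j : A2) :
    i ∈ substPow σ (n₁ + t) j := by
  have hsp : substPow σ (n₁ + t) j = ap σ n₁ (substPow σ t j) := by
    rw [substPow_eq, ← ap_ap, substPow_eq]
  rw [hsp]
  obtain ⟨c, hc⟩ := List.exists_mem_of_ne_nil _ (substPow_ne_nil hσ t j)
  have hinf := substPow_infix_of_mem σ n₁ hc
  exact hinf.mem (h i c)

lemma primitive_substPow {σ : Subst} (hσ : Primitive σ) (hne : NonErasing σ) {k : ℕ}
    (hk : 1 ≤ k) : Primitive (substPow σ k) := by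
  obtain ⟨n₁, hn₁, hpos⟩ := hσ
  refine ⟨n₁, hn₁, fun i j => ?_⟩
  rw [Mpow_count]
  have h1 : substPow (substPow σ k) n₁ j = substPow σ (k * n₁) j := substPow_comp σ k n₁ j
  rw [h1]
  have h2 : i ∈ substPow σ (k * n₁) j := by
    obtain ⟨k', rfl⟩ : ∃ k', k = k' + 1 := ⟨k - 1, by omega⟩
    have hkn : (k' + 1) * n₁ = n₁ + k' * n₁ := by ring
    rw [hkn]
    exact mem_substPow_add hne (mem_of_prim hpos) _ i j
  have := List.count_pos_iff.mpr h2
  exact_mod_cast this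

end HullAux

namespace HullAux
open TwoSubst List

/-- The language of a substitution. -/
def Lang (σ : Subst) (w : List A2) : Prop := ∃ (n : ℕ) (x : A2), w <:+: substPow σ n x

lemma two_le_length {l : List A2} (h0 : (0 : A2) ∈ l) (h1 : (1 : A2) ∈ l) :
    2 ≤ l.length := by
  match l with
  | [] => simp at h0
  | [x] =>
      simp at h0 h1
      exact absurd (h0.trans h1.symm) (by decide)
  | x :: y :: t => simp [List.length_cons]

lemma length_ap_double {σ : Subst} {n₁ : ℕ} (h : ∀ i j, i ∈ substPow σ n₁ j)
    (w : List A2) : 2 * w.length ≤ (ap σ n₁ w).length := by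
  induction w with
  | nil => simp [ap_nil]
  | cons c w ih =>
      have hcw : (c :: w) = [c] ++ w := rfl
      rw [hcw, ap_append, List.length_append]
      have h2 : 2 ≤ (ap σ n₁ [c]).length := by
        rw [← substPow_eq]
        exact two_le_length (h 0 c) (h 1 c)
      simp only [List.length_append, List.length_cons, List.length_nil]
      omega

lemma length_substPow_unbounded {σ : Subst} {n₁ : ℕ} (hσ : NonErasing σ)
    (h : ∀ i j, i ∈ substPow σ n₁ j) (t : ℕ) (j : A2) :
    t + 1 ≤ (substPow σ (t * n₁) j).length := by
  induction t with
  | zero =>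
      have := length_le_ap hσ 0 [j]
      simpa [substPow_eq, Nat.one_le_iff_ne_zero, Nat.pos_iff_ne_zero] using List.length_pos_iff.2 (substPow_ne_nil hσ 0 j)
  | succ t ih =>
      have hsp : substPow σ ((t+1) * n₁) j = ap σ n₁ (substPow σ (t * n₁) j) := by
        rw [substPow_eq, substPow_eq, ap_ap]
        congr 1
        ring
      rw [hsp]
      have := length_ap_double h (substPow σ (t * n₁) j)
      omega

/-- occurrence of letter `i` arbitrarily far from the left end -/
lemma occ_left {σ : Subst} (hσ : Primitive σ) (hne : NonErasing σ) (P : ℕ) (i : A2) :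
    ∃ (m : ℕ) (j : A2) (y₁ y₂ : List A2),
      substPow σ m j = y₁ ++ i :: y₂ ∧ P ≤ y₁.length := by
  obtain ⟨n₁, hn₁, hpos⟩ := hσ
  have hmem := mem_of_prim hpos
  set z := substPow σ ((P+1) * n₁) 0 with hz
  have hlen : P + 2 ≤ z.length := length_substPow_unbounded hne hmem (P+1) 0
  obtain ⟨z', c, hzc⟩ : ∃ z' c, z = z' ++ [c] := by
    rcases List.eq_nil_or_concat z with h | ⟨z', c, h⟩
    · rw [h] at hlen; simp at hlen
    · exact ⟨z', c, by rw [h, List.concat_eq_append]⟩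
  obtain ⟨u, v, huv⟩ := List.append_of_mem (hmem i c)
  refine ⟨n₁ + (P+1) * n₁, 0, ap σ n₁ z' ++ u, v, ?_, ?_⟩
  · have h1 : substPow σ (n₁ + (P+1) * n₁) 0 = ap σ n₁ z := by
      rw [hz, substPow_eq, substPow_eq, ap_ap]
    rw [h1, hzc, ap_append]
    have h2 : ap σ n₁ [c] = u ++ i :: v := by rw [← substPow_eq, huv]
    rw [h2, List.append_assoc]
  · have h3 : z'.length ≤ (ap σ n₁ z').length := length_le_ap hne n₁ z'
    have h4 : z.length = z'.length + 1 := by rw [hzc]; simp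
    rw [List.length_append]
    omega

/-- occurrence of letter `i` arbitrarily far from the right end -/
lemma occ_right {σ : Subst} (hσ : Primitive σ) (hne : NonErasing σ) (P : ℕ) (i : A2) :
    ∃ (m : ℕ) (j : A2) (y₁ y₂ : List A2),
      substPow σ m j = y₁ ++ i :: y₂ ∧ P ≤ y₂.length := by
  obtain ⟨n₁, hn₁, hpos⟩ := hσ
  have hmem := mem_of_prim hpos
  set z := substPow σ ((P+1) * n₁) 0 with hz
  have hlen : P + 2 ≤ z.length := length_substPow_unbounded hne hmem (P+1) 0
  obtain ⟨c, z', hzc⟩ : ∃ c z', z = c :: z' := by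
    cases h : z with
    | nil => rw [h] at hlen; simp at hlen
    | cons c z' => exact ⟨c, z', rfl⟩
  obtain ⟨u, v, huv⟩ := List.append_of_mem (hmem i c)
  refine ⟨n₁ + (P+1) * n₁, 0, u, v ++ ap σ n₁ z', ?_, ?_⟩
  · have h1 : substPow σ (n₁ + (P+1) * n₁) 0 = ap σ n₁ z := by
      rw [hz, substPow_eq, substPow_eq, ap_ap]
    rw [h1, hzc]
    have hc : (c :: z') = [c] ++ z' := rfl
    rw [hc, ap_append]
    have h2 : ap σ n₁ [c] = u ++ i :: v := by rw [← substPow_eq, huv]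
    rw [h2]
    simp
  · have h3 : z'.length ≤ (ap σ n₁ z').length := length_le_ap hne n₁ z'
    have h4 : z.length = z'.length + 1 := by rw [hzc]; simp
    rw [List.length_append]
    omega

/-- the language of `σ^k` equals the language of `σ` -/
lemma lang_pow_iff {σ : Subst} (hσ : Primitive σ) (hne : NonErasing σ) {k : ℕ}
    (hk : 1 ≤ k) (w : List A2) : Lang (substPow σ k) w ↔ Lang σ w := by
  constructor
  · rintro ⟨n, x, hw⟩
    rw [substPow_comp] at hw
    exact ⟨k * n, x, hw⟩
  · rintro ⟨n, x, hw⟩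
    obtain ⟨n₁, hn₁, hpos⟩ := hσ
    have hmem := mem_of_prim hpos
    refine ⟨n + n₁, 0, ?_⟩
    rw [substPow_comp]
    have hge : n + n₁ ≤ k * (n + n₁) := Nat.le_mul_of_pos_left _ hk
    have ht : k * (n + n₁) = n + (n₁ + (k * (n + n₁) - n - n₁)) := by omega
    have hmem2 : x ∈ substPow σ (n₁ + (k * (n + n₁) - n - n₁)) 0 :=
      mem_substPow_add hne hmem _ x 0
    have hinf : substPow σ n x <:+: ap σ n (substPow σ (n₁ + (k * (n + n₁) - n - n₁)) 0) :=
      substPow_infix_of_mem σ n hmem2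
    have heq : ap σ n (substPow σ (n₁ + (k * (n + n₁) - n - n₁)) 0) = substPow σ (k * (n+n₁)) 0 := by
      rw [substPow_eq, ap_ap, ← substPow_eq, ← ht]
    rw [heq] at hinf
    exact hw.trans hinf
  
end HullAux

namespace HullAux
open TwoSubst List

/-- the conjugacy relation between substitutions at the level of words -/
def Rel (τ₁ τ₂ : Subst) (p : List A2) : Prop :=
  ∀ x : List A2, apply τ₁ x ++ p = p ++ apply τ₂ x

lemma rel_ap {τ₁ τ₂ : Subst} {p : List A2} (h : Rel τ₁ τ₂ p) (n : ℕ) :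
    ∃ q : List A2, ∀ x : List A2, ap τ₁ n x ++ q = q ++ ap τ₂ n x := by
  induction n with
  | zero => exact ⟨[], fun x => by simp [ap_zero]⟩
  | succ n ih =>
      obtain ⟨q, hq⟩ := ih
      refine ⟨q ++ ap τ₂ n p, fun x => ?_⟩
      have h1 : ap τ₁ (n+1) x ++ q = q ++ ap τ₂ n (apply τ₁ x) := by
        rw [ap_succ]; exact hq (apply τ₁ x)
      calc ap τ₁ (n+1) x ++ (q ++ ap τ₂ n p)
          = (ap τ₁ (n+1) x ++ q) ++ ap τ₂ n p := by rw [List.append_assoc]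
        _ = q ++ (ap τ₂ n (apply τ₁ x) ++ ap τ₂ n p) := by rw [h1, List.append_assoc]
        _ = q ++ ap τ₂ n (apply τ₁ x ++ p) := by rw [ap_append]
        _ = q ++ ap τ₂ n (p ++ apply τ₂ x) := by rw [h x]
        _ = q ++ (ap τ₂ n p ++ ap τ₂ n (apply τ₂ x)) := by rw [ap_append]
        _ = (q ++ ap τ₂ n p) ++ ap τ₂ (n+1) x := by rw [← ap_succ, List.append_assoc]

lemma lang_of_rel {τ₁ τ₂ : Subst} {p : List A2} (hrel : Rel τ₁ τ₂ p)
    (h₁ : NonErasing τ₁) (h₂ : NonErasing τ₂) (hp₂ : Primitive τ₂) {w : List A2}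
    (hw : Lang τ₁ w) : Lang τ₂ w := by
  obtain ⟨n, i, hwn⟩ := hw
  obtain ⟨q, hq⟩ := rel_ap hrel n
  obtain ⟨m0, j, y₁, y₂, hdec, hP⟩ := occ_left hp₂ h₂ q.length i
  set X := y₁ ++ [i] with hX
  obtain ⟨u, v, huv⟩ := hwn
  -- ap τ₁ n X = (ap τ₁ n y₁ ++ u) ++ w ++ v
  have hui : ap τ₁ n [i] = u ++ w ++ v := by rw [← substPow_eq, ← huv]
  have hA : ap τ₁ n X = (ap τ₁ n y₁ ++ u) ++ (w ++ v) := by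
    rw [hX, ap_append, hui]
    simp [List.append_assoc]
  have hEQ := hq X
  -- q ++ ap τ₂ n X = (ap τ₁ n y₁ ++ u) ++ (w ++ (v ++ q))
  have hW : q ++ ap τ₂ n X = (ap τ₁ n y₁ ++ u) ++ (w ++ (v ++ q)) := by
    rw [← hEQ, hA]
    simp [List.append_assoc]
  have hlen : q.length ≤ (ap τ₁ n y₁ ++ u).length := by
    have := length_le_ap h₁ n y₁
    rw [List.length_append]
    omega
  have hdrop : ap τ₂ n X = (ap τ₁ n y₁ ++ u).drop q.length ++ (w ++ (v ++ q)) := by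
    have h3 : (q ++ ap τ₂ n X).drop q.length = ap τ₂ n X := by
      rw [List.drop_append_of_le_length le_rfl]
      simp
    rw [← h3, hW, List.drop_append_of_le_length hlen]
  have hinfX : w <:+: ap τ₂ n X := by
    rw [hdrop]
    exact ⟨(ap τ₁ n y₁ ++ u).drop q.length, v ++ q, by simp [List.append_assoc]⟩
  refine ⟨n + m0, j, hinfX.trans ?_⟩
  have hXinf : X <:+: substPow τ₂ m0 j := by
    rw [hdec, hX]
    exact ⟨[], y₂, by simp⟩
  have h5 := ap_infix τ₂ n hXinf
  rwa [substPow_eq, ap_ap, ← substPow_eq] at h5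

lemma lang_of_rel' {τ₁ τ₂ : Subst} {p : List A2} (hrel : Rel τ₁ τ₂ p)
    (h₁ : NonErasing τ₁) (h₂ : NonErasing τ₂) (hp₁ : Primitive τ₁) {w : List A2}
    (hw : Lang τ₂ w) : Lang τ₁ w := by
  obtain ⟨n, i, hwn⟩ := hw
  obtain ⟨q, hq⟩ := rel_ap hrel n
  obtain ⟨m0, j, y₁, y₂, hdec, hP⟩ := occ_right hp₁ h₁ q.length i
  set X := [i] ++ y₂ with hX
  obtain ⟨u, v, huv⟩ := hwn
  have hEQ := hq X
  have hui : ap τ₂ n [i] = u ++ w ++ v := by rw [← substPow_eq, ← huv]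
  have hW : ap τ₁ n X ++ q = (q ++ u) ++ (w ++ (v ++ ap τ₂ n y₂)) := by
    rw [hEQ, hX, ap_append, hui]
    simp [List.append_assoc]
  have hy2 : q.length ≤ (ap τ₂ n y₂).length := le_trans hP (length_le_ap h₂ n y₂)
  have hlenW := congrArg List.length hW
  simp only [List.length_append] at hlenW
  have hinfX : w <:+: ap τ₁ n X := by
    have hT : ap τ₁ n X = ((q ++ u) ++ (w ++ (v ++ ap τ₂ n y₂))).take (ap τ₁ n X).length := by
      conv_lhs => rw [← List.take_left (l₁ := ap τ₁ n X) (l₂ := q)]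
      rw [hW]
    rw [List.take_append] at hT
    have hq1 : (q ++ u).length ≤ (ap τ₁ n X).length := by
      rw [List.length_append]; omega
    rw [List.take_of_length_le hq1, List.take_append] at hT
    have hq2 : w.length ≤ (ap τ₁ n X).length - (q ++ u).length := by
      rw [List.length_append]; omega
    rw [List.take_of_length_le hq2] at hT
    refine ⟨q ++ u, (v ++ ap τ₂ n y₂).take ((ap τ₁ n X).length - (q ++ u).length - w.length), ?_⟩
    rw [hT]; simp [List.append_assoc]; omega
  refine ⟨n + m0, j, hinfX.trans ?_⟩
  have hXinf : X <:+: substPow τ₁ m0 j := by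
    rw [hdec, hX]
    exact ⟨y₁, [], by simp⟩
  have h5 := ap_infix τ₁ n hXinf
  rwa [substPow_eq, ap_ap, ← substPow_eq] at h5

end HullAux

namespace HullAux
open TwoSubst List

lemma toFG_nil : toFG [] = 1 := rfl

lemma toFG_cons (i : A2) (u : List A2) : toFG (i :: u) = FreeGroup.of i * toFG u := by
  simp [toFG]

lemma toFG_append (u v : List A2) : toFG (u ++ v) = toFG u * toFG v := by
  simp [toFG]

lemma endo_toFG (τ : Subst) (x : List A2) : endo τ (toFG x) = toFG (apply τ x) := by
  induction x with
  | nil => simp [toFG_nil, apply]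
  | cons c x ih =>
      have h1 : apply τ (c :: x) = τ c ++ apply τ x := rfl
      rw [toFG_cons, map_mul, ih, h1, toFG_append]
      congr 1
      exact FreeGroup.lift_apply_of

/-- lift a word to an all-positive word in the free group alphabet -/
def lift1 (u : List A2) : List (A2 × Bool) := u.map fun i => (i, true)

lemma length_lift1 (u : List A2) : (lift1 u).length = u.length := by simp [lift1]

lemma toFG_eq_mk (u : List A2) : toFG u = FreeGroup.mk (lift1 u) := by
  induction u with
  | nil => rw [toFG_nil, lift1]; simp [FreeGroup.one_eq_mk]
  | cons c u ih =>
      rw [toFG_cons, ih]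
      have : FreeGroup.of c = FreeGroup.mk [(c, true)] := rfl
      rw [this, FreeGroup.mul_mk]
      rfl

/-- reducedness of a word over the free group alphabet -/
def Rd (L : List (A2 × Bool)) : Prop := List.Chain' (fun a b => b ≠ (a.1, !a.2)) L

lemma rd_lift1 (u : List A2) : Rd (lift1 u) := by
  induction u with
  | nil => exact List.isChain_nil
  | cons c u ih =>
      cases u with
      | nil => exact List.isChain_singleton _
      | cons d u =>
          refine List.isChain_cons_cons.mpr ⟨?_, ih⟩
          simp [lift1]

lemma rd_tail {x : A2 × Bool} {L : List (A2 × Bool)} (h : Rd (x :: L)) : Rd L :=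
  List.IsChain.tail h

lemma reduce_eq_self {L : List (A2 × Bool)} (h : Rd L) : FreeGroup.reduce L = L := by
  induction L with
  | nil => rfl
  | cons x L ih =>
      have hL : Rd L := rd_tail h
      rw [FreeGroup.reduce.cons, ih hL]
      cases L with
      | nil => rfl
      | cons y t =>
          have hxy : y ≠ (x.1, !x.2) := (List.isChain_cons_cons.mp h).1
          show (if x.1 = y.1 ∧ x.2 = !y.2 then t else x :: y :: t) = x :: y :: t
          rw [if_neg]
          rintro ⟨h1, h2⟩
          exact hxy (by rw [Prod.ext_iff]; exact ⟨h1.symm, by rw [h2]; simp⟩)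

lemma not_chain'_decomp {α : Type*} {R : α → α → Prop} {l : List α}
    (h : ¬ List.Chain' R l) : ∃ u a b v, l = u ++ a :: b :: v ∧ ¬ R a b := by
  induction l with
  | nil => exact absurd List.isChain_nil h
  | cons x l ih =>
      cases l with
      | nil => exact absurd (List.isChain_singleton x) h
      | cons y t =>
          by_cases hxy : R x y
          · have hyt : ¬ List.Chain' R (y :: t) := by
              intro hc
              exact h (List.isChain_cons_cons.mpr ⟨hxy, hc⟩)
            obtain ⟨u, a, b, v, hl, hR⟩ := ih hyt
            exact ⟨x :: u, a, b, v, by rw [hl]; rfl, hR⟩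
          · exact ⟨[], x, y, t, rfl, hxy⟩

lemma rd_toWord (g : FreeGroup A2) : Rd (FreeGroup.toWord g) := by
  by_contra h
  obtain ⟨u, a, b, v, hl, hR⟩ := not_chain'_decomp h
  have hb : b = (a.1, !a.2) := not_not.mp hR
  have hx : FreeGroup.reduce (FreeGroup.toWord g) = u ++ (a.1, a.2) :: (a.1, !a.2) :: v := by
    rw [FreeGroup.reduce_toWord, hl, hb]
  exact FreeGroup.reduce.not hx

lemma invRev_concat (c : List (A2 × Bool)) (ℓ : A2 × Bool) :
    FreeGroup.invRev (c ++ [ℓ]) = (ℓ.1, !ℓ.2) :: FreeGroup.invRev c := by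
  simp [FreeGroup.invRev]

lemma mem_invRev {L : List (A2 × Bool)} {pr : A2 × Bool} :
    pr ∈ FreeGroup.invRev L ↔ (pr.1, !pr.2) ∈ L := by
  simp only [FreeGroup.invRev, List.mem_reverse, List.mem_map]
  constructor
  · rintro ⟨q, hq, rfl⟩
    simpa using hq
  · intro h
    exact ⟨(pr.1, !pr.2), h, by simp⟩

/-- the junction (cancellation) lemma for concatenations of reduced words -/
lemma junction : ∀ (N : ℕ) (L₁ L₂ : List (A2 × Bool)), L₁.length ≤ N → Rd L₁ → Rd L₂ →
    ∃ a b c, L₁ = a ++ c ∧ L₂ = FreeGroup.invRev c ++ b ∧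
      FreeGroup.reduce (L₁ ++ L₂) = a ++ b := by
  intro N
  induction N with
  | zero =>
      intro L₁ L₂ hlen h1 h2
      have hnil : L₁ = [] := List.eq_nil_of_length_eq_zero (Nat.le_zero.mp hlen)
      subst hnil
      exact ⟨[], L₂, [], by simp, by simp [FreeGroup.invRev], by simp [reduce_eq_self h2]⟩
  | succ N ih =>
      intro L₁ L₂ hlen h1 h2
      rcases List.eq_nil_or_concat L₁ with rfl | ⟨L₁', ℓ, hL₁⟩
      · exact ⟨[], L₂, [], by simp, by simp [FreeGroup.invRev], by simp [reduce_eq_self h2]⟩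
      rw [List.concat_eq_append] at hL₁
      cases L₂ with
      | nil =>
          exact ⟨L₁, [], [], by simp, by simp [FreeGroup.invRev], by simp [reduce_eq_self h1]⟩
      | cons m L₂' =>
          by_cases hm : m = (ℓ.1, !ℓ.2)
          · have hL₁len : L₁'.length ≤ N := by
              have := congrArg List.length hL₁
              simp at this
              omega
            have h1' : Rd L₁' := (List.isChain_append.mp (hL₁ ▸ h1)).1
            have h2' : Rd L₂' := rd_tail h2
            obtain ⟨a, b, c, ha, hb, hred⟩ := ih L₁' L₂' hL₁len h1' h2'
            refine ⟨a, b, c ++ [ℓ], ?_, ?_, ?_⟩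
            · rw [hL₁, ha, List.append_assoc]
            · rw [invRev_concat, ← hm, hb]; rfl
            · have heq : L₁ ++ (m :: L₂') = L₁' ++ (ℓ.1, ℓ.2) :: (ℓ.1, !ℓ.2) :: L₂' := by
                rw [hL₁, hm, List.append_assoc]
                rfl
              have hstep : FreeGroup.Red.Step (L₁' ++ (ℓ.1, ℓ.2) :: (ℓ.1, !ℓ.2) :: L₂')
                  (L₁' ++ L₂') := FreeGroup.Red.Step.not
              rw [heq, FreeGroup.reduce.Step.eq hstep, hred]
          · refine ⟨L₁, m :: L₂', [], by simp, by simp [FreeGroup.invRev], ?_⟩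
            apply reduce_eq_self
            rw [hL₁, List.append_assoc]
            have hsplit := List.isChain_append.mp (hL₁ ▸ h1)
            refine List.isChain_append.mpr ⟨hsplit.1, List.isChain_cons_cons.mpr ⟨hm, h2⟩, ?_⟩
            intro x hx y hy
            exact hsplit.2.2 x hx y (by simpa using hy)

end HullAux

namespace HullAux
open TwoSubst List

/-- the total-exponent homomorphism -/
def lenHom : FreeGroup A2 →* Multiplicative ℤ :=
  FreeGroup.lift fun _ => Multiplicative.ofAdd 1

lemma lenHom_toFG (u : List A2) :
    lenHom (toFG u) = Multiplicative.ofAdd (u.length : ℤ) := by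
  induction u with
  | nil => rw [toFG_nil, map_one]; rfl
  | cons c u ih =>
      rw [toFG_cons, map_mul, ih]
      have h1 : lenHom (FreeGroup.of c) = Multiplicative.ofAdd 1 := FreeGroup.lift_apply_of
      rw [h1, ← ofAdd_add]
      congr 1
      simp
      ring

lemma lift1_fst {L : List (A2 × Bool)} (h : ∀ pr ∈ L, pr.2 = true) :
    lift1 (L.map Prod.fst) = L := by
  unfold lift1
  rw [List.map_map]
  conv_rhs => rw [← List.map_id L]
  apply List.map_congr_left
  intro pr hpr
  have := h pr hpr
  simp [Function.comp]
  rw [Prod.ext_iff]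
  exact ⟨rfl, this.symm⟩

lemma toFG_inj {u v : List A2} (h : toFG u = toFG v) : u = v := by
  have h2 := congrArg FreeGroup.toWord h
  rw [toFG_eq_mk, toFG_eq_mk, FreeGroup.toWord_mk, FreeGroup.toWord_mk,
    reduce_eq_self (rd_lift1 u), reduce_eq_self (rd_lift1 v)] at h2
  have hinj : Function.Injective (fun i : A2 => (i, true)) := by
    intro a b hab
    simpa using congrArg Prod.fst hab
  exact List.map_injective_iff.mpr hinj h2

lemma conj_rel {τ₁ τ₂ : Subst} (h₁ : NonErasing τ₁) (hc : Conj τ₁ τ₂) :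
    (∃ p, Rel τ₁ τ₂ p) ∨ (∃ q, Rel τ₂ τ₁ q) := by
  classical
  obtain ⟨w0, hw⟩ := hc
  have E : ∀ x : List A2, toFG (apply τ₁ x) * w0 = w0 * toFG (apply τ₂ x) := by
    intro x
    have h3 := hw (toFG x)
    rw [endo_toFG, endo_toFG] at h3
    rw [h3]; group
  have hlen : ∀ x : List A2, (apply τ₁ x).length = (apply τ₂ x).length := by
    intro x
    have h3 := congrArg lenHom (E x)
    rw [map_mul, map_mul, lenHom_toFG, lenHom_toFG] at h3
    rw [mul_comm (lenHom w0)] at h3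
    have h4 := mul_right_cancel h3
    have h5 : ((apply τ₁ x).length : ℤ) = ((apply τ₂ x).length : ℤ) :=
      Multiplicative.ofAdd.injective h4
    exact_mod_cast h5
  set W := FreeGroup.toWord w0 with hWdef
  have hRdW : Rd W := rd_toWord w0
  set x₀ : List A2 := List.replicate W.length 0 with hx₀
  set U := apply τ₁ x₀ with hUdef
  set V := apply τ₂ x₀ with hVdef
  have hUlen : W.length ≤ U.length := by
    have h6 := length_le_apply h₁ x₀
    rwa [hx₀, List.length_replicate] at h6
  have hUV : U.length = V.length := hlen x₀
  have hmkW : FreeGroup.mk W = w0 := FreeGroup.mk_toWord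
  have hE0 : FreeGroup.mk (lift1 U ++ W) = FreeGroup.mk (W ++ lift1 V) := by
    rw [← FreeGroup.mul_mk, ← FreeGroup.mul_mk, hmkW, ← toFG_eq_mk, ← toFG_eq_mk]
    exact E x₀
  have hred := FreeGroup.reduce.sound hE0
  obtain ⟨a₁, b₁, c₁, hU1, hW1, hr1⟩ :=
    junction (lift1 U).length (lift1 U) W le_rfl (rd_lift1 U) hRdW
  obtain ⟨a₂, b₂, c₂, hW2, hV2, hr2⟩ :=
    junction W.length W (lift1 V) le_rfl hRdW (rd_lift1 V)
  rw [hr1, hr2] at hred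
  have l1 : U.length = a₁.length + c₁.length := by
    have := congrArg List.length hU1
    rwa [length_lift1, List.length_append] at this
  have l2 : W.length = c₁.length + b₁.length := by
    have := congrArg List.length hW1
    rwa [List.length_append, FreeGroup.invRev_length] at this
  have l3 : W.length = a₂.length + c₂.length := by
    have := congrArg List.length hW2
    rwa [List.length_append] at this
  have l4 : V.length = c₂.length + b₂.length := by
    have := congrArg List.length hV2
    rwa [length_lift1, List.length_append, FreeGroup.invRev_length] at this
  have l5 : a₁.length + b₁.length = a₂.length + b₂.length := by
    have := congrArg List.length hred
    rwa [List.length_append, List.length_append] at this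
  have hk : c₁.length = c₂.length := by omega
  have hTrueU : ∀ pr ∈ lift1 U, pr.2 = true := by
    intro pr hpr
    simp only [lift1, List.mem_map] at hpr
    obtain ⟨i, _, rfl⟩ := hpr
    rfl
  have hTrueV : ∀ pr ∈ lift1 V, pr.2 = true := by
    intro pr hpr
    simp only [lift1, List.mem_map] at hpr
    obtain ⟨i, _, rfl⟩ := hpr
    rfl
  have hc₁true : ∀ pr ∈ c₁, pr.2 = true := by
    intro pr hpr
    exact hTrueU pr (hU1 ▸ List.mem_append_right a₁ hpr)
  have ha₁true : ∀ pr ∈ a₁, pr.2 = true := by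
    intro pr hpr
    exact hTrueU pr (hU1 ▸ List.mem_append_left c₁ hpr)
  have hc₂false : ∀ pr ∈ c₂, pr.2 = false := by
    intro pr hpr
    have h7 : (pr.1, !pr.2) ∈ FreeGroup.invRev c₂ := by
      rw [mem_invRev]
      simpa using hpr
    have h8 : (pr.1, !pr.2) ∈ lift1 V := hV2 ▸ List.mem_append_left b₂ h7
    have := hTrueV _ h8
    simp at this
    exact this
  by_cases hcase : c₁.length = W.length
  · -- W is an all-negative word: the swapped relation holds
    right
    have hb₁ : b₁ = [] := by
      have : b₁.length = 0 := by omega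
      exact List.eq_nil_of_length_eq_zero this
    have hWfalse : ∀ pr ∈ W, pr.2 = false := by
      intro pr hpr
      rw [hW1, hb₁, List.append_nil] at hpr
      have h9 : (pr.1, !pr.2) ∈ c₁ := by
        rw [mem_invRev] at hpr
        simpa using hpr
      have := hc₁true _ h9
      simp at this
      exact this
    refine ⟨(FreeGroup.invRev W).map Prod.fst, fun x => ?_⟩
    have hq : toFG ((FreeGroup.invRev W).map Prod.fst) = w0⁻¹ := by
      rw [toFG_eq_mk, lift1_fst, ← FreeGroup.inv_mk, hmkW]
      intro pr hpr
      rw [mem_invRev] at hpr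
      have := hWfalse _ hpr
      simpa using this
    apply toFG_inj
    rw [toFG_append, toFG_append, hq]
    have h10 : toFG (apply τ₂ x) = w0⁻¹ * (toFG (apply τ₁ x) * w0) := by
      rw [E x]; group
    rw [h10]; group
  · -- W is an all-positive word: the direct relation holds
    left
    have hklt : c₁.length < W.length := by omega
    have ha₂take : a₂ = a₁.take a₂.length := by
      have h14 : (a₁ ++ b₁).take a₂.length = a₁.take a₂.length :=
        List.take_append_of_le_length (show a₂.length ≤ a₁.length by omega)
      rw [hred] at h14
      rw [List.take_append_of_le_length le_rfl, List.take_length] at h14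
      exact h14
    have ha₂true : ∀ pr ∈ a₂, pr.2 = true := by
      intro pr hpr
      rw [ha₂take] at hpr
      exact ha₁true pr ((List.take_prefix _ _).subset hpr)
    have hk0 : c₁.length = 0 := by
      by_contra hne
      -- W starts with a false letter and with a true letter
      obtain ⟨pr, t, hcons⟩ : ∃ pr t, FreeGroup.invRev c₁ = pr :: t := by
        cases hiv : FreeGroup.invRev c₁ with
        | nil =>
            have := congrArg List.length hiv
            rw [FreeGroup.invRev_length] at this
            simp only [List.length_nil] at this
            exfalso
            omega
        | cons pr t => exact ⟨pr, t, rfl⟩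
      obtain ⟨pr', t', hcons'⟩ : ∃ pr' t', a₂ = pr' :: t' := by
        cases ha2 : a₂ with
        | nil =>
            have := congrArg List.length ha2
            simp only [List.length_nil] at this
            exfalso
            omega
        | cons pr' t' => exact ⟨pr', t', rfl⟩
      have hw1 : W = pr :: (t ++ b₁) := by rw [hW1, hcons]; rfl
      have hw2 : W = pr' :: (t' ++ c₂) := by rw [hW2, hcons']; rfl
      have hpr_eq : pr = pr' := by
        rw [hw1] at hw2
        exact (List.cons.injEq _ _ _ _ ▸ hw2).1
      have hfalse : pr.2 = false := by
        have h13 : (pr.1, !pr.2) ∈ c₁ := by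
          have : pr ∈ FreeGroup.invRev c₁ := by rw [hcons]; exact List.mem_cons_self
          rw [mem_invRev] at this
          simpa using this
        have := hc₁true _ h13
        simpa using this
      have htrue : pr'.2 = true := ha₂true pr' (by rw [hcons']; exact List.mem_cons_self)
      rw [hpr_eq, htrue] at hfalse
      simp at hfalse
    have hc₂nil : c₂ = [] := List.eq_nil_of_length_eq_zero (by omega)
    have hWtrue : ∀ pr ∈ W, pr.2 = true := by
      rw [hW2, hc₂nil, List.append_nil]
      exact ha₂true
    refine ⟨W.map Prod.fst, fun x => ?_⟩
    have hp : toFG (W.map Prod.fst) = w0 := by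
      rw [toFG_eq_mk, lift1_fst hWtrue, hmkW]
    apply toFG_inj
    rw [toFG_append, toFG_append, hp]
    exact E x

end HullAux


open TwoSubst in
/-- If `σ, ρ` are primitive substitutions on two letters and
`σ^k ~ ρ^m` for some `k, m ≥ 1`, then `X_σ = X_ρ`. -/
theorem hull_eq_of_conj_pow (σ ρ : Subst) (hneσ : NonErasing σ) (hneρ : NonErasing ρ)
    (hσ : Primitive σ) (hρ : Primitive ρ)
    (h : ∃ k m : ℕ, 1 ≤ k ∧ 1 ≤ m ∧ Conj (substPow σ k) (substPow ρ m)) :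
    Hull σ = Hull ρ := by
  obtain ⟨k, m, hk, hm, hconj⟩ := h
  have hne₁ : NonErasing (substPow σ k) := HullAux.nonErasing_substPow hneσ k
  have hne₂ : NonErasing (substPow ρ m) := HullAux.nonErasing_substPow hneρ m
  have hp₁ : Primitive (substPow σ k) := HullAux.primitive_substPow hσ hneσ hk
  have hp₂ : Primitive (substPow ρ m) := HullAux.primitive_substPow hρ hneρ hm
  have hlang : ∀ w, HullAux.Lang σ w ↔ HullAux.Lang ρ w := by
    intro w
    rw [← HullAux.lang_pow_iff hσ hneσ hk w, ← HullAux.lang_pow_iff hρ hneρ hm w]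
    rcases HullAux.conj_rel hne₁ hconj with ⟨p, hrel⟩ | ⟨q, hrel⟩
    · exact ⟨fun hw => HullAux.lang_of_rel hrel hne₁ hne₂ hp₂ hw,
        fun hw => HullAux.lang_of_rel' hrel hne₁ hne₂ hp₁ hw⟩
    · exact ⟨fun hw => HullAux.lang_of_rel' hrel hne₂ hne₁ hp₂ hw,
        fun hw => HullAux.lang_of_rel hrel hne₂ hne₁ hp₁ hw⟩
  ext u
  simp only [Hull, Set.mem_setOf_eq]
  constructor
  · intro hu w hf
    exact (hlang w).mp (hu w hf)
  · intro hu w hf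
    exact (hlang w).mpr (hu w hf)
end
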